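/- arXiv:1610.08485 — 7 statements merged into one kernel-verified Lean document; each statement's English description precedes it below -/
import Mathlib

section
/- Let n ≥ 1 and k ≥ 1. If A(z) = ∑_{m=0}^∞ A_m z^m is a formal power series with coefficients A_m ∈ M_n(ℂ) whose constant coefficient A_0 is similar to J, then there exist an invertible matrix g_0 ∈ GL_n(ℂ) and matrices g_1, …, g_k ∈ M_n(ℂ) such that, setting g(z) = (I + g_k z^k)(I + g_{k−1} z^{k−1}) ⋯ (I + g_1 z) g_0 (a polynomial gauge transformation, invertible in M_n(ℂ)[[z]]) and B(z) = g(z) A(z) g(z)^{−1} = ∑_{m=0}^∞ B_m z^m, one has B_0 = J and, for every ℓ with 1 ≤ ℓ ≤ k, the matrix B_ℓ has nonzero entries only in its n-th (last) row, i.e. (B_ℓ)_{i,j} = 0 whenever i < n. -/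
open PowerSeries


/-- Recursive coefficients solving the last-row normalisation. -/
private def Gaux (M : ℕ → ℕ → ℂ) : ℕ → ℕ → ℂ
  | 0, _ => 0
  | r+1, j => M r j + (match j with | 0 => 0 | jj+1 => Gaux M r jj)

/-- For the nilpotent Jordan block `J`, any matrix can be corrected by a commutator
`g*J - J*g` to have nonzero entries only in the last row. -/
lemma exists_gauge (n : ℕ) (J : Matrix (Fin n) (Fin n) ℂ)
    (hJ : ∀ i j : Fin n, J i j = if (i : ℕ) + 1 = (j : ℕ) then 1 else 0)
    (M : Matrix (Fin n) (Fin n) ℂ) :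
    ∃ g : Matrix (Fin n) (Fin n) ℂ,
      ∀ i j : Fin n, (i : ℕ) + 1 < n → (M + g * J - J * g) i j = 0 := by
  set M' : ℕ → ℕ → ℂ := fun r j =>
    if h : r < n ∧ j < n then M ⟨r, h.1⟩ ⟨j, h.2⟩ else 0 with hM'
  refine ⟨Matrix.of (fun i j => Gaux M' i j), ?_⟩
  intro i j hi
  have hgJ : (Matrix.of (fun i j : Fin n => Gaux M' i j) * J) i j
      = (match (j : ℕ) with | 0 => 0 | jj+1 => Gaux M' i jj) := by
    rw [Matrix.mul_apply]
    rcases hj : (j : ℕ) with _ | jj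
    · apply Finset.sum_eq_zero
      intro k _
      rw [hJ, hj]
      simp
    · have hjj : jj < n := by omega
      rw [Finset.sum_eq_single_of_mem (⟨jj, hjj⟩ : Fin n) (Finset.mem_univ _)]
      · rw [hJ]
        simp [hj]
      · intro b _ hb
        rw [hJ, hj, if_neg, mul_zero]
        intro hc
        apply hb
        refine Fin.ext ?_
        simp only [Fin.val_mk]
        omega
  have hJg : (J * Matrix.of (fun i j : Fin n => Gaux M' i j)) i j
      = Gaux M' ((i : ℕ) + 1) j := by
    rw [Matrix.mul_apply]
    rw [Finset.sum_eq_single_of_mem (⟨(i : ℕ) + 1, hi⟩ : Fin n) (Finset.mem_univ _)]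
    · rw [hJ]; simp
    · intro b _ hb
      rw [hJ, if_neg, zero_mul]
      intro hc
      refine hb (Fin.ext ?_)
      simp only [Fin.val_mk]
      omega
  have hMij : M' (i : ℕ) (j : ℕ) = M i j := by
    rw [hM']
    have h1 : (i : ℕ) < n := by omega
    have h2 : (j : ℕ) < n := j.isLt
    simp only [dif_pos (And.intro h1 h2)]
  rw [Matrix.sub_apply, Matrix.add_apply, hgJ, hJg]
  show M i j + _ - Gaux M' ((i:ℕ)+1) j = 0
  rw [show Gaux M' ((i:ℕ)+1) j = M' i j + (match (j:ℕ) with | 0 => 0 | jj+1 => Gaux M' i jj) from rfl,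
    hMij]
  ring


lemma ps_coeff_mul_monomial {R : Type*} [Ring R] (f : PowerSeries R) (d m : ℕ) (a : R) :
    PowerSeries.coeff m (f * PowerSeries.monomial d a)
      = if d ≤ m then PowerSeries.coeff (m - d) f * a else 0 := by
  rw [PowerSeries.coeff_mul]
  by_cases h : d ≤ m
  · rw [if_pos h, Finset.sum_eq_single_of_mem (m - d, d)
      (Finset.HasAntidiagonal.mem_antidiagonal.mpr (by omega))]
    · rw [PowerSeries.coeff_monomial, if_pos rfl]
    · intro b hb hne
      rw [PowerSeries.coeff_monomial, if_neg, mul_zero]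
      intro hc
      apply hne
      have := Finset.HasAntidiagonal.mem_antidiagonal.mp hb
      have : b.1 = m - d := by omega
      exact Prod.ext this hc
  · rw [if_neg h]
    apply Finset.sum_eq_zero
    intro b hb
    have := Finset.HasAntidiagonal.mem_antidiagonal.mp hb
    rw [PowerSeries.coeff_monomial, if_neg (by omega), mul_zero]

lemma ps_coeff_monomial_mul {R : Type*} [Ring R] (f : PowerSeries R) (d m : ℕ) (a : R) :
    PowerSeries.coeff m (PowerSeries.monomial d a * f)
      = if d ≤ m then a * PowerSeries.coeff (m - d) f else 0 := by
  rw [PowerSeries.coeff_mul]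
  by_cases h : d ≤ m
  · rw [if_pos h, Finset.sum_eq_single_of_mem (d, m - d)
      (Finset.HasAntidiagonal.mem_antidiagonal.mpr (by omega))]
    · rw [PowerSeries.coeff_monomial, if_pos rfl]
    · intro b hb hne
      rw [PowerSeries.coeff_monomial, if_neg, zero_mul]
      intro hc
      apply hne
      have := Finset.HasAntidiagonal.mem_antidiagonal.mp hb
      have h2 : b.2 = m - d := by omega
      exact Prod.ext hc h2
  · rw [if_neg h]
    apply Finset.sum_eq_zero
    intro b hb
    have := Finset.HasAntidiagonal.mem_antidiagonal.mp hb
    rw [PowerSeries.coeff_monomial, if_neg (by omega), zero_mul]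

lemma step_lemma (n : ℕ) (J : Matrix (Fin n) (Fin n) ℂ)
    (hJ : ∀ i j : Fin n, J i j = if (i : ℕ) + 1 = (j : ℕ) then 1 else 0)
    (A' : PowerSeries (Matrix (Fin n) (Fin n) ℂ))
    (h0 : PowerSeries.coeff 0 A' = J) (k : ℕ) :
    ∃ (gs : ℕ → Matrix (Fin n) (Fin n) ℂ) (B : PowerSeries (Matrix (Fin n) (Fin n) ℂ)),
      (((List.range k).reverse.map
          (fun i => (1 : PowerSeries (Matrix (Fin n) (Fin n) ℂ))
            + PowerSeries.monomial (i + 1) (gs (i + 1)))).prod) * A'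
        = B * (((List.range k).reverse.map
          (fun i => (1 : PowerSeries (Matrix (Fin n) (Fin n) ℂ))
            + PowerSeries.monomial (i + 1) (gs (i + 1)))).prod)
      ∧ PowerSeries.coeff 0 B = J
      ∧ ∀ ℓ : ℕ, 1 ≤ ℓ → ℓ ≤ k → ∀ i j : Fin n, (i : ℕ) + 1 < n →
          PowerSeries.coeff ℓ B i j = 0 := by
  induction k with
  | zero =>
    refine ⟨0, A', by simp, h0, ?_⟩
    intro ℓ h1 h2
    omega
  | succ k ih =>
    obtain ⟨gs, B, hcomm, hB0, hBrow⟩ := ih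
    obtain ⟨g, hg⟩ := exists_gauge n J hJ (PowerSeries.coeff (k + 1) B)
    set m : PowerSeries (Matrix (Fin n) (Fin n) ℂ) :=
      PowerSeries.monomial (k + 1) g with hm
    set F : PowerSeries (Matrix (Fin n) (Fin n) ℂ) := 1 + m with hF
    have hFc : PowerSeries.constantCoeff F = ((1 : (Matrix (Fin n) (Fin n) ℂ)ˣ) : Matrix (Fin n) (Fin n) ℂ) := by
      have hmc : PowerSeries.constantCoeff m = 0 := by
        rw [hm, ← PowerSeries.coeff_zero_eq_constantCoeff_apply,
          PowerSeries.coeff_monomial, if_neg (by omega)]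
      rw [hF, map_add, hmc, map_one, add_zero, Units.val_one]
    have hFinv : PowerSeries.invOfUnit F 1 * F = 1 := PowerSeries.invOfUnit_mul F 1 hFc
    set B' : PowerSeries (Matrix (Fin n) (Fin n) ℂ) := F * B * PowerSeries.invOfUnit F 1 with hB'
    have hB'F : B' * F = F * B := by
      rw [hB', mul_assoc, hFinv, mul_one]
    -- coefficient comparison
    have hcoeff : ∀ ℓ : ℕ, PowerSeries.coeff ℓ B' + PowerSeries.coeff ℓ (B' * m)
        = PowerSeries.coeff ℓ B + PowerSeries.coeff ℓ (m * B) := by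
      intro ℓ
      have h1 : B' * F = B' + B' * m := by rw [hF, mul_add, mul_one]
      have h2 : F * B = B + m * B := by rw [hF, add_mul, one_mul]
      have := congrArg (PowerSeries.coeff ℓ) (h1 ▸ h2 ▸ hB'F)
      simpa [map_add] using this
    have hlow : ∀ ℓ : ℕ, ℓ ≤ k → PowerSeries.coeff ℓ B' = PowerSeries.coeff ℓ B := by
      intro ℓ hℓ
      have := hcoeff ℓ
      rw [hm, ps_coeff_mul_monomial, ps_coeff_monomial_mul, if_neg (by omega),
        if_neg (by omega), add_zero, add_zero] at this
      exact this
    have hB'0 : PowerSeries.coeff 0 B' = J := by rw [hlow 0 (by omega), hB0]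
    have htop : PowerSeries.coeff (k + 1) B'
        = PowerSeries.coeff (k + 1) B + g * J - J * g := by
      have := hcoeff (k + 1)
      rw [hm, ps_coeff_mul_monomial, ps_coeff_monomial_mul, if_pos (le_refl _),
        if_pos (le_refl _), Nat.sub_self, hB'0, hB0] at this
      exact eq_sub_iff_add_eq.mpr this
    refine ⟨Function.update gs (k + 1) g, B', ?_, hB'0, ?_⟩
    · have hprodeq :
          (List.map (fun i => (1 : PowerSeries (Matrix (Fin n) (Fin n) ℂ))
              + PowerSeries.monomial (i + 1) (Function.update gs (k + 1) g (i + 1)))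
            (List.range k).reverse).prod
          = (List.map (fun i => (1 : PowerSeries (Matrix (Fin n) (Fin n) ℂ))
              + PowerSeries.monomial (i + 1) (gs (i + 1))) (List.range k).reverse).prod := by
        congr 1
        apply List.map_congr_left
        intro i hi
        have : i < k := by
          have := List.mem_reverse.mp hi
          exact List.mem_range.mp this
        rw [Function.update_of_ne (by omega)]
      rw [List.range_succ, List.reverse_append, List.map_append, List.prod_append]
      simp only [List.reverse_singleton, List.map_cons, List.map_nil, List.prod_cons,
        List.prod_nil, mul_one]
      rw [hprodeq, Function.update_self]
      calc (1 + PowerSeries.monomial (k + 1) g)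
            * (List.map (fun i => (1 : PowerSeries (Matrix (Fin n) (Fin n) ℂ))
              + PowerSeries.monomial (i + 1) (gs (i + 1))) (List.range k).reverse).prod * A'
          = F * ((List.map (fun i => (1 : PowerSeries (Matrix (Fin n) (Fin n) ℂ))
              + PowerSeries.monomial (i + 1) (gs (i + 1))) (List.range k).reverse).prod * A') := by
            rw [hF, hm, mul_assoc]
        _ = F * (B * (List.map (fun i => (1 : PowerSeries (Matrix (Fin n) (Fin n) ℂ))
              + PowerSeries.monomial (i + 1) (gs (i + 1))) (List.range k).reverse).prod) := by
            rw [hcomm]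
        _ = (B' * F) * (List.map (fun i => (1 : PowerSeries (Matrix (Fin n) (Fin n) ℂ))
              + PowerSeries.monomial (i + 1) (gs (i + 1))) (List.range k).reverse).prod := by
            rw [hB'F, mul_assoc]
        _ = B' * ((1 + PowerSeries.monomial (k + 1) g)
            * (List.map (fun i => (1 : PowerSeries (Matrix (Fin n) (Fin n) ℂ))
              + PowerSeries.monomial (i + 1) (gs (i + 1))) (List.range k).reverse).prod) := by
            rw [hF, hm, mul_assoc]
    · intro ℓ h1 h2 i j hij
      rcases Nat.lt_or_ge ℓ (k + 1) with hc | hc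
      · rw [hlow ℓ (by omega)]
        exact hBrow ℓ h1 (by omega) i j hij
      · have hℓ : ℓ = k + 1 := by omega
        subst hℓ
        rw [htop]
        exact hg i j hij

/-- **Existence of the normal form** (Theorem `normform`).
If the constant coefficient of `A ∈ Mₙ(ℂ)[[z]]` is similar to the nilpotent Jordan block `J`,
then there is a polynomial gauge transformation
`g(z) = (I + gₖ zᵏ) ⋯ (I + g₁ z) g₀` (invertible in `Mₙ(ℂ)[[z]]`, with inverse `h`)
such that `B = g A g⁻¹` has `B₀ = J` and `B₁, …, B_k` nonzero only in the last row. -/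
theorem normal_form_existence (n k : ℕ) (hn : 1 ≤ n) (hk : 1 ≤ k)
    (J : Matrix (Fin n) (Fin n) ℂ)
    (hJ : ∀ i j : Fin n, J i j = if (i : ℕ) + 1 = (j : ℕ) then 1 else 0)
    (A : PowerSeries (Matrix (Fin n) (Fin n) ℂ))
    (hA0 : ∃ P : (Matrix (Fin n) (Fin n) ℂ)ˣ,
      PowerSeries.coeff 0 A = (P : Matrix (Fin n) (Fin n) ℂ) * J * (↑P⁻¹ : Matrix (Fin n) (Fin n) ℂ)) :
    ∃ (g0 : (Matrix (Fin n) (Fin n) ℂ)ˣ) (gs : ℕ → Matrix (Fin n) (Fin n) ℂ)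
      (h : PowerSeries (Matrix (Fin n) (Fin n) ℂ)),
      (((List.range k).reverse.map
          (fun i => (1 : PowerSeries (Matrix (Fin n) (Fin n) ℂ))
            + PowerSeries.monomial (i + 1) (gs (i + 1)))).prod
          * PowerSeries.C (g0 : Matrix (Fin n) (Fin n) ℂ)) * h = 1 ∧
      h * (((List.range k).reverse.map
          (fun i => (1 : PowerSeries (Matrix (Fin n) (Fin n) ℂ))
            + PowerSeries.monomial (i + 1) (gs (i + 1)))).prod
          * PowerSeries.C (g0 : Matrix (Fin n) (Fin n) ℂ)) = 1 ∧
      (PowerSeries.coeff 0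
          ((((List.range k).reverse.map
            (fun i => (1 : PowerSeries (Matrix (Fin n) (Fin n) ℂ))
              + PowerSeries.monomial (i + 1) (gs (i + 1)))).prod
            * PowerSeries.C (g0 : Matrix (Fin n) (Fin n) ℂ)) * A * h) = J) ∧
      ∀ ℓ : ℕ, 1 ≤ ℓ → ℓ ≤ k → ∀ i j : Fin n, (i : ℕ) + 1 < n →
        PowerSeries.coeff ℓ
          ((((List.range k).reverse.map
            (fun i => (1 : PowerSeries (Matrix (Fin n) (Fin n) ℂ))
              + PowerSeries.monomial (i + 1) (gs (i + 1)))).prod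
            * PowerSeries.C (g0 : Matrix (Fin n) (Fin n) ℂ)) * A * h) i j = 0 := by
  obtain ⟨P, hP⟩ := hA0
  set g0 : (Matrix (Fin n) (Fin n) ℂ)ˣ := P⁻¹ with hg0
  set A' : PowerSeries (Matrix (Fin n) (Fin n) ℂ) :=
    PowerSeries.C (g0 : Matrix (Fin n) (Fin n) ℂ) * A
      * PowerSeries.C ((↑g0⁻¹ : Matrix (Fin n) (Fin n) ℂ)) with hA'
  have hA'0 : PowerSeries.coeff 0 A' = J := by
    rw [hA']
    simp only [PowerSeries.coeff_zero_eq_constantCoeff_apply, map_mul,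
      PowerSeries.constantCoeff_C]
    rw [← PowerSeries.coeff_zero_eq_constantCoeff_apply, hP, hg0]
    simp only [inv_inv]
    rw [show ((P⁻¹ : (Matrix (Fin n) (Fin n) ℂ)ˣ) : Matrix (Fin n) (Fin n) ℂ)
        * (↑P * J * ↑P⁻¹) * ↑P
        = (↑P⁻¹ * ↑P) * J * (↑P⁻¹ * ↑P) from by noncomm_ring]
    rw [Units.inv_mul]
    simp
  obtain ⟨gs, B, hcomm, hB0, hBrow⟩ := step_lemma n J hJ A' hA'0 k
  set Pk : PowerSeries (Matrix (Fin n) (Fin n) ℂ) :=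
    ((List.range k).reverse.map
      (fun i => (1 : PowerSeries (Matrix (Fin n) (Fin n) ℂ))
        + PowerSeries.monomial (i + 1) (gs (i + 1)))).prod with hPk
  set U : PowerSeries (Matrix (Fin n) (Fin n) ℂ) :=
    Pk * PowerSeries.C (g0 : Matrix (Fin n) (Fin n) ℂ) with hU
  have hPkc : PowerSeries.constantCoeff Pk = 1 := by
    rw [hPk, map_list_prod]
    apply List.prod_eq_one
    intro x hx
    simp only [List.map_map, List.mem_map] at hx
    obtain ⟨i, _, hxe⟩ := hx
    rw [← hxe]
    simp only [Function.comp_apply, map_add, map_one]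
    rw [← PowerSeries.coeff_zero_eq_constantCoeff_apply, PowerSeries.coeff_monomial,
      if_neg (by omega), add_zero]
  have hUc : PowerSeries.constantCoeff U = (g0 : Matrix (Fin n) (Fin n) ℂ) := by
    rw [hU, map_mul, hPkc, one_mul, PowerSeries.constantCoeff_C]
  set h : PowerSeries (Matrix (Fin n) (Fin n) ℂ) := PowerSeries.invOfUnit U g0 with hh
  have hUh : U * h = 1 := PowerSeries.mul_invOfUnit U g0 hUc
  have hhU : h * U = 1 := PowerSeries.invOfUnit_mul U g0 hUc
  have hUA : U * A = B * U := by
    have hc1 : PowerSeries.C ((↑g0⁻¹ : Matrix (Fin n) (Fin n) ℂ))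
        * PowerSeries.C ((g0 : Matrix (Fin n) (Fin n) ℂ)) = 1 := by
      rw [← map_mul, Units.inv_mul, map_one]
    have key : Pk * A' * PowerSeries.C ((g0 : Matrix (Fin n) (Fin n) ℂ)) = U * A := by
      calc Pk * A' * PowerSeries.C ((g0 : Matrix (Fin n) (Fin n) ℂ))
          = Pk * PowerSeries.C ((g0 : Matrix (Fin n) (Fin n) ℂ)) * A
            * (PowerSeries.C ((↑g0⁻¹ : Matrix (Fin n) (Fin n) ℂ))
              * PowerSeries.C ((g0 : Matrix (Fin n) (Fin n) ℂ))) := by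
            rw [hA']; noncomm_ring
        _ = U * A := by rw [hc1, mul_one, hU]
    rw [← key, hcomm, hU, mul_assoc]
  have hB : U * A * h = B := by
    rw [hUA, mul_assoc, hUh, mul_one]
  refine ⟨g0, gs, h, hUh, hhU, ?_, ?_⟩
  · rw [← hU, hB, hB0]
  · intro ℓ h1 h2 i j hij
    rw [← hU, hB]
    exact hBrow ℓ h1 h2 i j hij
end

section
/- Let n ≥ 2, let ω ∈ ℂ be a primitive n-th root of unity, let t be an integer with 1 ≤ t ≤ n−1, and let w_1, …, w_{t+1} be integers with −n < w_1 < 0, 0 < w_i < n for 2 ≤ i ≤ t+1, and w_1 + w_2 + ⋯ + w_{t+1} = 0. Then (1/t!) · ∑ ω^{w_1 s_1 + w_2 s_2 + ⋯ + w_{t+1} s_{t+1}} = (−1)^t · n, where the sum ranges over all tuples (s_1, …, s_{t+1}) of pairwise distinct elements of {1, …, n}. -/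
open Finset in
/-- Auxiliary induction: the special (nonpositive) weight may sit at any index `i₀`,
and we only require `w i₀ ≤ 0` (so that the base case `t = 0`, `w i₀ = 0` works). -/
lemma roots_of_unity_distinct_tuple_sum_aux (n : ℕ) (hn : 2 ≤ n)
    (ω : ℂ) (hω : IsPrimitiveRoot ω n) :
    ∀ t : ℕ, ∀ w : Fin (t + 1) → ℤ, ∀ i₀ : Fin (t + 1),
    -(n : ℤ) < w i₀ → w i₀ ≤ 0 →
    (∀ i, i ≠ i₀ → 0 < w i ∧ w i < n) → (∑ i, w i) = 0 →
    ∑ s ∈ Finset.univ.filter (fun s : Fin (t + 1) → Fin n => Function.Injective s),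
        ω ^ (∑ i, w i * ((s i : ℤ) + 1)) = (-1) ^ t * n * t.factorial := by
  intro t
  induction t with
  | zero =>
    intro w i₀ h1 h2 h3 h4
    have hi₀ : i₀ = 0 := Subsingleton.elim (α := Fin 1) i₀ 0
    have hw0 : w 0 = 0 := by
      have : ∑ i, w i = w 0 := Fin.sum_univ_one w
      omega
    have hfil : (Finset.univ.filter (fun s : Fin 1 → Fin n => Function.Injective s))
        = Finset.univ := by
      apply Finset.filter_true_of_mem
      intro s _
      exact Function.injective_of_subsingleton s
    rw [hfil]
    have hterm : ∀ s : Fin 1 → Fin n, ω ^ (∑ i, w i * ((s i : ℤ) + 1)) = 1 := by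
      intro s
      have : (∑ i, w i * ((s i : ℤ) + 1)) = 0 := by
        rw [Fin.sum_univ_one, hw0, zero_mul]
      rw [this, zpow_zero]
    rw [Finset.sum_congr rfl (fun s _ => hterm s)]
    simp [Finset.card_univ]
  | succ t ih =>
    intro w i₀ h1 h2 h3 h4
    classical
    have hnz : (n : ℤ) ≠ 0 := by positivity
    have hωne : ω ≠ 0 := hω.ne_zero (by omega)
    -- pair sum fact
    have hpair : ∀ a b : Fin (t + 2), a ≠ b →
        w a + w b + ∑ i ∈ (Finset.univ.erase a).erase b, w i = 0 := by
      intro a b hab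
      have h4' := h4
      rw [← Finset.add_sum_erase _ w (Finset.mem_univ a),
        ← Finset.add_sum_erase _ w
          (Finset.mem_erase.mpr ⟨Ne.symm hab, Finset.mem_univ b⟩)] at h4'
      linarith
    -- bounds on w 0
    have hw0a : -(n : ℤ) < w 0 ∧ w 0 < n ∧ w 0 ≠ 0 := by
      by_cases h0 : i₀ = 0
      · subst h0
        have hne : ((0 : Fin (t + 1)).succ : Fin (t + 2)) ≠ 0 := Fin.succ_ne_zero _
        have hpos : 0 < ∑ i ∈ Finset.univ.erase (0 : Fin (t + 2)), w i := by
          apply Finset.sum_pos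
          · intro i hi
            exact (h3 i (Finset.mem_erase.mp hi).1).1
          · exact ⟨_, Finset.mem_erase.mpr ⟨hne, Finset.mem_univ _⟩⟩
        have hsum := Finset.add_sum_erase Finset.univ w (Finset.mem_univ (0 : Fin (t + 2)))
        rw [h4] at hsum
        have hn0 : (0 : ℤ) < (n : ℤ) := by exact_mod_cast (by omega : 0 < n)
        refine ⟨h1, by linarith, by intro hc; rw [hc] at hsum; linarith⟩
      · obtain ⟨hp, hq⟩ := h3 0 (Ne.symm h0)
        exact ⟨by linarith, hq, by omega⟩
    -- geometric sum vanishes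
    have hgeom : ∑ x : Fin n, ω ^ (w 0 * ((x : ℤ) + 1)) = 0 := by
      have hn0 : (0 : ℤ) < (n : ℤ) := by exact_mod_cast (by omega : 0 < n)
      have hη1 : ω ^ (w 0) ≠ 1 := by
        intro hcon
        rw [hω.zpow_eq_one_iff_dvd] at hcon
        obtain ⟨c, hc⟩ := hcon
        have hc1 : c < 1 := by
          have h : (n : ℤ) * c < (n : ℤ) * 1 := by rw [mul_one, ← hc]; exact hw0a.2.1
          exact lt_of_mul_lt_mul_left h (le_of_lt hn0)
        have hc2 : -1 < c := by
          have h : (n : ℤ) * (-1) < (n : ℤ) * c := by rw [mul_neg_one, ← hc]; exact hw0a.1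
          exact lt_of_mul_lt_mul_left h (le_of_lt hn0)
        have hc0 : c = 0 := by omega
        rw [hc0, mul_zero] at hc
        exact hw0a.2.2 hc
      have hηn : (ω ^ (w 0)) ^ n = 1 := by
        rw [← zpow_natCast (ω ^ (w 0)), ← zpow_mul, mul_comm, zpow_mul,
          zpow_natCast, hω.pow_eq_one, one_zpow]
      calc ∑ x : Fin n, ω ^ (w 0 * ((x : ℤ) + 1))
          = ∑ x : Fin n, (ω ^ (w 0)) * (ω ^ (w 0)) ^ (x : ℕ) := by
            refine Finset.sum_congr rfl fun x _ => ?_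
            rw [zpow_mul, zpow_add₀ (zpow_ne_zero _ hωne), zpow_one, zpow_natCast]
            ring
        _ = (ω ^ (w 0)) * ∑ x ∈ Finset.range n, (ω ^ (w 0)) ^ x := by
            rw [← Finset.mul_sum, Fin.sum_univ_eq_sum_range]
        _ = 0 := by
            rw [geom_sum_eq hη1, hηn, sub_self, zero_div, mul_zero]
    -- inner IH sums
    have hIH : ∀ j : Fin (t + 1),
        ∑ g ∈ Finset.univ.filter (fun g : Fin (t + 1) → Fin n => Function.Injective g),
          ω ^ (∑ i, (w i.succ + if i = j then w 0 else 0) * ((g i : ℤ) + 1))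
        = (-1) ^ t * n * t.factorial := by
      intro j
      set v : Fin (t + 1) → ℤ := fun i => w i.succ + if i = j then w 0 else 0 with hv
      have hvj : v j = w j.succ + w 0 := by simp [hv]
      have hvne : ∀ i, i ≠ j → v i = w i.succ := by
        intro i hi; simp [hv, hi]
      have hvsum : (∑ i, v i) = 0 := by
        simp only [hv, Finset.sum_add_distrib, Finset.sum_ite_eq', Finset.mem_univ, if_true]
        rw [Fin.sum_univ_succ] at h4
        linarith
      have hS_nonneg : ∀ a b : Fin (t + 2), a ≠ b →
          (∀ i ∈ (Finset.univ.erase a).erase b, i ≠ i₀) → w a + w b ≤ 0 := by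
        intro a b hab hmem
        have := hpair a b hab
        have : 0 ≤ ∑ i ∈ (Finset.univ.erase a).erase b, w i :=
          Finset.sum_nonneg fun i hi => le_of_lt (h3 i (hmem i hi)).1
        linarith [hpair a b hab]
      rcases Fin.eq_zero_or_eq_succ i₀ with h0 | ⟨k, hk⟩
      · -- special index was 0; new special index is j
        refine ih v j ?_ ?_ ?_ hvsum
        · have := (h3 j.succ (by rw [h0]; exact Fin.succ_ne_zero j)).1
          rw [hvj]; linarith
        · rw [hvj]
          refine hS_nonneg j.succ 0 (Fin.succ_ne_zero j) ?_
          intro i hi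
          rw [h0]
          exact (Finset.mem_erase.mp hi).1
        · intro i hi
          rw [hvne i hi]
          exact h3 i.succ (by rw [h0]; exact Fin.succ_ne_zero i)
      · -- special index was k.succ
        have hw0pos : 0 < w 0 := (h3 0 (by rw [hk]; exact (Fin.succ_ne_zero k).symm)).1
        by_cases hjk : j = k
        · subst hjk
          refine ih v j ?_ ?_ ?_ hvsum
          · rw [hvj, ← hk] at *
            linarith [h1]
          · rw [hvj, ← hk]
            refine hS_nonneg i₀ 0 (by rw [hk]; exact Fin.succ_ne_zero j) ?_
            intro i hi
            exact (Finset.mem_erase.mp (Finset.mem_of_mem_erase hi)).1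
          · intro i hi
            rw [hvne i hi]
            refine h3 i.succ ?_
            rw [hk]
            exact fun h => hi (Fin.succ_injective _ h)
        · -- special index stays at k
          refine ih v k ?_ ?_ ?_ ?_
          · rw [hvne k (fun h => hjk h.symm), ← hk]; exact h1
          · rw [hvne k (fun h => hjk h.symm), ← hk]; exact h2
          · intro i hik
            by_cases hij : i = j
            · subst hij
              rw [hvj]
              constructor
              · have := (h3 i.succ (by rw [hk]; exact fun h => hik (Fin.succ_injective _ h))).1
                linarith
              · -- w i.succ + w 0 < n since i₀ = k.succ is in the erased set
                have hmem : i₀ ∈ (Finset.univ.erase i.succ).erase 0 := by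
                  rw [hk]
                  refine Finset.mem_erase.mpr ⟨Fin.succ_ne_zero k, Finset.mem_erase.mpr
                    ⟨fun h => hik (Fin.succ_injective _ h).symm, Finset.mem_univ _⟩⟩
                have hsplit := Finset.add_sum_erase _ w hmem
                have hrest : 0 ≤ ∑ x ∈ ((Finset.univ.erase i.succ).erase 0).erase i₀, w x :=
                  Finset.sum_nonneg fun x hx => le_of_lt (h3 x (Finset.mem_erase.mp hx).1).1
                have := hpair i.succ 0 (Fin.succ_ne_zero i)
                linarith
            · rw [hvne i hij]
              refine h3 i.succ ?_
              rw [hk]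
              exact fun h => hik (Fin.succ_injective _ h)
          · exact hvsum
    -- main computation
    have step1 :
        ∑ s ∈ Finset.univ.filter (fun s : Fin (t + 2) → Fin n => Function.Injective s),
            ω ^ (∑ i, w i * ((s i : ℤ) + 1))
        = ∑ x : Fin n, ∑ g : Fin (t + 1) → Fin n,
            (if Function.Injective (Fin.cons x g : Fin (t + 2) → Fin n) then
              ω ^ (∑ i : Fin (t + 2), w i * (((Fin.cons x g : Fin (t + 2) → Fin n) i : ℤ) + 1))
             else 0) := by
      rw [Finset.sum_filter,
        ← Equiv.sum_comp (Fin.consEquiv (fun _ : Fin (t + 2) => Fin n))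
          (fun s : Fin (t + 2) → Fin n =>
            if Function.Injective s then ω ^ (∑ i, w i * ((s i : ℤ) + 1)) else 0),
        Fintype.sum_prod_type]
      rfl
    have hsplit : ∀ (x : Fin n) (g : Fin (t + 1) → Fin n),
        (if Function.Injective (Fin.cons x g : Fin (t + 2) → Fin n) then
            ω ^ (∑ i : Fin (t + 2), w i * (((Fin.cons x g : Fin (t + 2) → Fin n) i : ℤ) + 1))
         else 0)
        = (if x ∈ Finset.univ.image g then 0 else ω ^ (w 0 * ((x : ℤ) + 1))) *
          (if Function.Injective g then
              ω ^ (∑ i : Fin (t + 1), w i.succ * ((g i : ℤ) + 1)) else 0) := by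
      intro x g
      have hiff : Function.Injective (Fin.cons x g : Fin (t + 2) → Fin n) ↔
          x ∉ Finset.univ.image g ∧ Function.Injective g := by
        rw [Fin.cons_injective_iff]
        simp [Set.mem_range, Finset.mem_image]
      have hexp : (∑ i : Fin (t + 2), w i * (((Fin.cons x g : Fin (t + 2) → Fin n) i : ℤ) + 1))
          = w 0 * ((x : ℤ) + 1) + ∑ i : Fin (t + 1), w i.succ * ((g i : ℤ) + 1) := by
        rw [Fin.sum_univ_succ]
        simp
      by_cases hx : x ∈ Finset.univ.image g <;> by_cases hg : Function.Injective g <;>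
        simp [hiff, hx, hg, hexp, zpow_add₀ hωne]
    have step2 :
        ∑ s ∈ Finset.univ.filter (fun s : Fin (t + 2) → Fin n => Function.Injective s),
            ω ^ (∑ i, w i * ((s i : ℤ) + 1))
        = ∑ g : Fin (t + 1) → Fin n,
            (∑ x : Fin n, if x ∈ Finset.univ.image g then 0 else ω ^ (w 0 * ((x : ℤ) + 1))) *
            (if Function.Injective g then
                ω ^ (∑ i : Fin (t + 1), w i.succ * ((g i : ℤ) + 1)) else 0) := by
      rw [step1]
      rw [Finset.sum_congr rfl (fun x _ => Finset.sum_congr rfl (fun g _ => hsplit x g))]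
      rw [Finset.sum_comm]
      exact Finset.sum_congr rfl fun g _ => (Finset.sum_mul _ _ _).symm
    have hxsum : ∀ g : Fin (t + 1) → Fin n,
        (∑ x : Fin n, if x ∈ Finset.univ.image g then 0 else ω ^ (w 0 * ((x : ℤ) + 1)))
        = -(∑ x ∈ Finset.univ.image g, ω ^ (w 0 * ((x : ℤ) + 1))) := by
      intro g
      have : ∀ x : Fin n,
          (if x ∈ Finset.univ.image g then 0 else ω ^ (w 0 * ((x : ℤ) + 1)))
          = ω ^ (w 0 * ((x : ℤ) + 1)) -
            (if x ∈ Finset.univ.image g then ω ^ (w 0 * ((x : ℤ) + 1)) else 0) := by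
        intro x; split_ifs <;> ring
      rw [Finset.sum_congr rfl fun x _ => this x, Finset.sum_sub_distrib, hgeom,
        Finset.sum_ite_mem, Finset.univ_inter, zero_sub]
    have step3 :
        ∑ s ∈ Finset.univ.filter (fun s : Fin (t + 2) → Fin n => Function.Injective s),
            ω ^ (∑ i, w i * ((s i : ℤ) + 1))
        = ∑ g : Fin (t + 1) → Fin n, ∑ j : Fin (t + 1),
            (if Function.Injective g then
              -(ω ^ (∑ i, (w i.succ + if i = j then w 0 else 0) * ((g i : ℤ) + 1))) else 0) := by
      rw [step2]
      refine Finset.sum_congr rfl fun g _ => ?_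
      by_cases hg : Function.Injective g
      · rw [if_pos hg, hxsum g,
          Finset.sum_image (fun a _ b _ h => hg h), neg_mul]
        have hterm : ∀ j : Fin (t + 1),
            ω ^ (w 0 * ((g j : ℤ) + 1)) * ω ^ (∑ i, w i.succ * ((g i : ℤ) + 1))
            = ω ^ (∑ i, (w i.succ + if i = j then w 0 else 0) * ((g i : ℤ) + 1)) := by
          intro j
          rw [← zpow_add₀ hωne]
          congr 1
          simp only [add_mul, Finset.sum_add_distrib, ite_mul, zero_mul,
            Finset.sum_ite_eq', Finset.mem_univ, if_true]
          ring
        calc -((∑ j : Fin (t + 1), ω ^ (w 0 * ((g j : ℤ) + 1))) *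
                ω ^ (∑ i, w i.succ * ((g i : ℤ) + 1)))
            = ∑ j : Fin (t + 1), -(ω ^ (w 0 * ((g j : ℤ) + 1)) *
                ω ^ (∑ i, w i.succ * ((g i : ℤ) + 1))) := by
              rw [Finset.sum_mul, ← Finset.sum_neg_distrib]
          _ = _ := by
              refine Finset.sum_congr rfl fun j _ => ?_
              rw [if_pos hg, hterm j]
      · rw [if_neg hg]
        rw [mul_zero]
        rw [Finset.sum_congr rfl fun j _ => if_neg hg]
        rw [Finset.sum_const, smul_zero]
    rw [step3, Finset.sum_comm]
    have step4 : ∀ j : Fin (t + 1),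
        (∑ g : Fin (t + 1) → Fin n,
          (if Function.Injective g then
            -(ω ^ (∑ i, (w i.succ + if i = j then w 0 else 0) * ((g i : ℤ) + 1))) else 0))
        = -((-1) ^ t * n * t.factorial) := by
      intro j
      rw [← hIH j, Finset.sum_filter]
      rw [← Finset.sum_neg_distrib]
      refine Finset.sum_congr rfl fun g _ => ?_
      split_ifs <;> simp
    rw [Finset.sum_congr rfl fun j _ => step4 j, Finset.sum_const, Finset.card_univ,
      Fintype.card_fin, nsmul_eq_mul]
    rw [Nat.factorial_succ]
    push_cast
    ring

/-- **Lemma 3.1.** For a primitive `n`-th root of unity `ω` and integer weights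
`w₁, …, w_{t+1}` with `-n < w₁ < 0`, `0 < wᵢ < n` for `i ≥ 2`, summing to zero,
`(1/t!) ∑ ω^{w₁s₁ + ⋯ + w_{t+1}s_{t+1}} = (-1)^t n`, the sum being over tuples
of pairwise distinct elements `s₁, …, s_{t+1}` of `{1, …, n}`. -/
theorem roots_of_unity_distinct_tuple_sum (n t : ℕ) (hn : 2 ≤ n) (ht1 : 1 ≤ t) (ht2 : t ≤ n - 1)
    (ω : ℂ) (hω : IsPrimitiveRoot ω n)
    (w : Fin (t + 1) → ℤ)
    (hw1a : -(n : ℤ) < w 0) (hw1b : w 0 < 0)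
    (hwi : ∀ i : Fin (t + 1), i ≠ 0 → 0 < w i ∧ w i < n)
    (hwsum : ∑ i, w i = 0) :
    (1 / (t.factorial : ℂ)) *
      ∑ s ∈ Finset.univ.filter (fun s : Fin (t + 1) → Fin n => Function.Injective s),
        ω ^ (∑ i, w i * ((s i : ℤ) + 1)) = (-1) ^ t * n := by
  rw [roots_of_unity_distinct_tuple_sum_aux n hn ω hω t w 0 hw1a (le_of_lt hw1b) hwi hwsum]
  have hfac : (t.factorial : ℂ) ≠ 0 := by
    exact_mod_cast Nat.factorial_ne_zero t
  field_simp
end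

section
/- Let n ≥ 2, let ω ∈ ℂ be a primitive n-th root of unity, and let t be an integer with 1 ≤ t ≤ n−1. Then ∑_{1 ≤ s_2 < s_3 < ⋯ < s_{t+1} ≤ n} ω^{s_2 + s_3 + ⋯ + s_{t+1}} · ( ∑_{s_1 ∈ {1,…,n} \ {s_2,…,s_{t+1}}} ω^{−t·s_1} ) = (−1)^t · n. -/
open Finset Polynomial

private lemma full_esymm_zero (n k : ℕ) (hn : 0 < n) (hk : 1 ≤ k) (hk2 : k ≤ n - 1)
    (ω : ℂ) (hω : IsPrimitiveRoot ω n) :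
    ∑ S ∈ (Finset.univ : Finset (Fin n)).powersetCard k, ∏ x ∈ S, ω ^ ((x : ℕ) + 1) = 0 := by
  have hesymm := Finset.esymm_map_val (fun x : Fin n => ω ^ ((x : ℕ) + 1)) Finset.univ k
  rw [← hesymm]
  have hcard : Multiset.card ((Finset.univ : Finset (Fin n)).val.map
      (fun x : Fin n => ω ^ ((x : ℕ) + 1))) = n := by simp
  -- the product of (X - C r) over s is X^n - 1
  have hprod : (((Finset.univ : Finset (Fin n)).val.map
      (fun x : Fin n => ω ^ ((x : ℕ) + 1))).map fun r => X - C r).prod = X ^ n - 1 := by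
    have h1 : (((Finset.univ : Finset (Fin n)).val.map
        (fun x : Fin n => ω ^ ((x : ℕ) + 1))).map fun r => X - C r).prod
        = ∏ x : Fin n, (X - C (ω ^ ((x : ℕ) + 1))) := by
      rw [Multiset.map_map]
      rfl
    rw [h1, Fin.prod_univ_eq_prod_range (fun i => X - C (ω ^ (i + 1))) n]
    have h2 : ∏ i ∈ Finset.range n, (X - C (ω ^ (i + 1)))
        = ∏ i ∈ Finset.range n, (X - C (ω ^ i)) := by
      have hA := Finset.prod_range_succ' (fun i => X - C (ω ^ i)) n
      have hB := Finset.prod_range_succ (fun i => X - C (ω ^ i)) n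
      have hωn : (X : ℂ[X]) - C (ω ^ n) = X - C (ω ^ 0) := by
        rw [hω.pow_eq_one, pow_zero]
      rw [hB, hωn] at hA
      have hne : (X : ℂ[X]) - C (ω ^ 0) ≠ 0 := X_sub_C_ne_zero _
      exact mul_right_cancel₀ hne hA.symm
    rw [h2]
    have := X_pow_sub_C_eq_prod hω hn (one_pow n)
    simp only [mul_one] at this
    rw [← this, map_one]
  -- coefficient extraction
  have hkn : k ≤ n := le_trans hk2 (Nat.sub_le n 1)
  have hle : n - k ≤ Multiset.card ((Finset.univ : Finset (Fin n)).val.map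
      (fun x : Fin n => ω ^ ((x : ℕ) + 1))) := by omega
  have hcoeff := Multiset.prod_X_sub_C_coeff _ hle
  rw [hprod, hcard] at hcoeff
  have hnk : n - (n - k) = k := by omega
  rw [hnk] at hcoeff
  have hzero : (X ^ n - 1 : ℂ[X]).coeff (n - k) = 0 := by
    rw [coeff_sub, coeff_X_pow, Polynomial.coeff_one]
    have h1 : n - k ≠ n := by omega
    have h2 : n - k ≠ 0 := by omega
    simp [h1, h2]
  rw [hzero] at hcoeff
  have hunit : ((-1 : ℂ) ^ k) ≠ 0 := by
    simp
  exact (mul_eq_zero.mp hcoeff.symm).resolve_left hunit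

private lemma erase_esymm (n : ℕ) (hn : 0 < n) (ω : ℂ) (hω : IsPrimitiveRoot ω n) :
    ∀ t : ℕ, t ≤ n - 1 → ∀ a : Fin n,
    ∑ S ∈ ((Finset.univ : Finset (Fin n)).erase a).powersetCard t, ∏ x ∈ S, ω ^ ((x : ℕ) + 1)
      = (-1) ^ t * (ω ^ ((a : ℕ) + 1)) ^ t := by
  intro t
  induction t with
  | zero => intro _ a; simp
  | succ t ih =>
    intro ht a
    have ih' := ih (by omega) a
    have hfull := full_esymm_zero n (t + 1) hn (by omega) ht ω hω
    have hmem : a ∉ (Finset.univ : Finset (Fin n)).erase a := Finset.notMem_erase a _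
    have huniv : (Finset.univ : Finset (Fin n)) =
        insert a ((Finset.univ : Finset (Fin n)).erase a) := by
      rw [Finset.insert_erase (Finset.mem_univ a)]
    rw [huniv, Finset.powersetCard_succ_insert hmem] at hfull
    have hdisj : Disjoint (((Finset.univ : Finset (Fin n)).erase a).powersetCard (t + 1))
        ((((Finset.univ : Finset (Fin n)).erase a).powersetCard t).image (insert a)) := by
      rw [Finset.disjoint_left]
      intro S hS hS'
      rw [Finset.mem_powersetCard] at hS
      rw [Finset.mem_image] at hS'
      obtain ⟨T, _, rfl⟩ := hS'
      exact hmem (hS.1 (Finset.mem_insert_self a T))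
    rw [Finset.sum_union hdisj] at hfull
    have hinj : Set.InjOn (insert a)
        ((((Finset.univ : Finset (Fin n)).erase a).powersetCard t) : Set (Finset (Fin n))) := by
      intro S hS S' hS' h
      simp only [Finset.mem_coe, Finset.mem_powersetCard] at hS hS'
      have haS : a ∉ S := fun h' => hmem (hS.1 h')
      have haS' : a ∉ S' := fun h' => hmem (hS'.1 h')
      rw [← Finset.erase_insert haS, h, Finset.erase_insert haS']
    rw [Finset.sum_image hinj] at hfull
    have himg : ∀ S ∈ (((Finset.univ : Finset (Fin n)).erase a).powersetCard t),
        ∏ x ∈ insert a S, ω ^ ((x : ℕ) + 1)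
          = ω ^ ((a : ℕ) + 1) * ∏ x ∈ S, ω ^ ((x : ℕ) + 1) := by
      intro S hS
      rw [Finset.mem_powersetCard] at hS
      exact Finset.prod_insert (fun h' => hmem (hS.1 h'))
    rw [Finset.sum_congr rfl himg, ← Finset.mul_sum, ih'] at hfull
    have : ∑ S ∈ ((Finset.univ : Finset (Fin n)).erase a).powersetCard (t + 1),
        ∏ x ∈ S, ω ^ ((x : ℕ) + 1)
        = -(ω ^ ((a : ℕ) + 1) * ((-1) ^ t * (ω ^ ((a : ℕ) + 1)) ^ t)) := by
      linear_combination hfull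
    rw [this]; ring

/-- Equation (3.8): for a primitive `n`-th root of unity `ω` and `1 ≤ t ≤ n - 1`,
`∑_{1 ≤ s₂ < ⋯ < s_{t+1} ≤ n} ω^{s₂ + ⋯ + s_{t+1}} (∑_{s₁ ∉ {s₂,…,s_{t+1}}} ω^{-t s₁}) = (-1)^t n`.
Strictly increasing tuples `(s₂, …, s_{t+1})` of elements of `{1, …, n}` are identified with
subsets of `Fin n` of cardinality `t`. -/
theorem roots_of_unity_ordered_sum (n t : ℕ) (hn : 2 ≤ n) (ht1 : 1 ≤ t) (ht2 : t ≤ n - 1)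
    (ω : ℂ) (hω : IsPrimitiveRoot ω n) :
    ∑ S ∈ Finset.univ.powersetCard t (α := Fin n),
      ω ^ (∑ x ∈ S, ((x : ℕ) + 1)) *
        ∑ s1 ∈ Sᶜ, ω ^ (-(t : ℤ) * ((s1 : ℤ) + 1)) = (-1) ^ t * n := by
  have hn0 : 0 < n := by omega
  have hω0 : ω ≠ 0 := hω.ne_zero (by omega)
  -- rewrite as double sum and swap
  have hswap : ∑ S ∈ Finset.univ.powersetCard t (α := Fin n),
      ω ^ (∑ x ∈ S, ((x : ℕ) + 1)) *
        ∑ s1 ∈ Sᶜ, ω ^ (-(t : ℤ) * ((s1 : ℤ) + 1))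
      = ∑ s1 : Fin n, ∑ S ∈ ((Finset.univ : Finset (Fin n)).erase s1).powersetCard t,
          ω ^ (∑ x ∈ S, ((x : ℕ) + 1)) * ω ^ (-(t : ℤ) * ((s1 : ℤ) + 1)) := by
    simp_rw [Finset.mul_sum]
    apply Finset.sum_comm'
    intro S s1
    simp only [Finset.mem_powersetCard, Finset.mem_compl, Finset.mem_univ, true_and,
      Finset.subset_erase, and_true]
    tauto
  rw [hswap]
  have hterm : ∀ s1 : Fin n,
      ∑ S ∈ ((Finset.univ : Finset (Fin n)).erase s1).powersetCard t,
          ω ^ (∑ x ∈ S, ((x : ℕ) + 1)) * ω ^ (-(t : ℤ) * ((s1 : ℤ) + 1)) = (-1) ^ t := by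
    intro s1
    rw [← Finset.sum_mul]
    have hpow : ∀ S : Finset (Fin n), ω ^ (∑ x ∈ S, ((x : ℕ) + 1))
        = ∏ x ∈ S, ω ^ ((x : ℕ) + 1) := by
      intro S; rw [← Finset.prod_pow_eq_pow_sum]
    simp_rw [hpow]
    rw [erase_esymm n hn0 ω hω t ht2 s1]
    have hz : (ω ^ ((s1 : ℕ) + 1)) ^ t * ω ^ (-(t : ℤ) * ((s1 : ℤ) + 1)) = 1 := by
      rw [← zpow_natCast ω ((s1 : ℕ) + 1), ← zpow_natCast _ t, ← zpow_mul, ← zpow_add₀ hω0]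
      have h0 : (((s1 : ℕ) + 1 : ℕ) : ℤ) * (t : ℤ) + -(t : ℤ) * ((s1 : ℤ) + 1) = 0 := by
        push_cast; ring
      rw [h0, zpow_zero]
    calc (-1 : ℂ) ^ t * (ω ^ ((s1 : ℕ) + 1)) ^ t * ω ^ (-(t : ℤ) * ((s1 : ℤ) + 1))
        = (-1) ^ t * ((ω ^ ((s1 : ℕ) + 1)) ^ t * ω ^ (-(t : ℤ) * ((s1 : ℤ) + 1))) := by ring
      _ = (-1) ^ t := by rw [hz, mul_one]
  rw [Finset.sum_congr rfl (fun s1 _ => hterm s1)]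
  simp [Finset.card_univ, mul_comm]
end

section
/- Let n ≥ 1. For every matrix M ∈ M_n(ℂ) there exists a matrix G ∈ M_n(ℂ) such that the matrix M − (JG − GJ) has nonzero entries only in its n-th (last) row, i.e. (M − [J,G])_{i,j} = 0 for all 1 ≤ i ≤ n−1 and 1 ≤ j ≤ n. -/
/-- Auxiliary recursive definition of the entries of `G`. -/
noncomputable def gAux (n : ℕ) (M : Matrix (Fin n) (Fin n) ℂ) : ℕ → ℕ → ℂ
  | 0, _ => 0
  | i + 1, j =>
      (if h : i < n ∧ j < n then M ⟨i, h.1⟩ ⟨j, h.2⟩ else 0) +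
      (if j = 0 then 0 else gAux n M i (j - 1))

/-- For every `M ∈ Mₙ(ℂ)` there is `G ∈ Mₙ(ℂ)` such that `M - [J,G]` has nonzero
entries only in the last row, where `J` is the nilpotent Jordan block. -/
theorem exists_commutator_clearing_rows (n : ℕ) (hn : 1 ≤ n)
    (J : Matrix (Fin n) (Fin n) ℂ)
    (hJ : ∀ i j : Fin n, J i j = if (i : ℕ) + 1 = (j : ℕ) then 1 else 0)
    (M : Matrix (Fin n) (Fin n) ℂ) :
    ∃ G : Matrix (Fin n) (Fin n) ℂ, ∀ i j : Fin n, (i : ℕ) + 1 < n →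
      (M - (J * G - G * J)) i j = 0 := by
  refine ⟨Matrix.of (fun i j : Fin n => gAux n M i.val j.val), fun i j h => ?_⟩
  have hJG : (J * Matrix.of (fun i j : Fin n => gAux n M i.val j.val)) i j
      = gAux n M (i.val + 1) j.val := by
    rw [Matrix.mul_apply]
    rw [Finset.sum_eq_single (⟨i.val + 1, h⟩ : Fin n)]
    · rw [hJ]; simp
    · intro k _ hk
      rw [hJ]
      have : ¬ ((i : ℕ) + 1 = (k : ℕ)) := by
        intro hc; exact hk (Fin.ext hc.symm)
      simp [this]
    · intro hk; exact absurd (Finset.mem_univ _) hk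
  have hGJ : (Matrix.of (fun i j : Fin n => gAux n M i.val j.val) * J) i j
      = if j.val = 0 then 0 else gAux n M i.val (j.val - 1) := by
    rw [Matrix.mul_apply]
    by_cases hj : j.val = 0
    · simp only [hj, if_pos]
      apply Finset.sum_eq_zero
      intro k _
      rw [hJ]
      simp [hj]
    · rw [if_neg hj]
      have hjlt : j.val - 1 < n := lt_of_le_of_lt (Nat.sub_le _ _) j.isLt
      rw [Finset.sum_eq_single (⟨j.val - 1, hjlt⟩ : Fin n)]
      · rw [hJ]
        simp [Nat.sub_add_cancel (Nat.one_le_iff_ne_zero.mpr hj)]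
      · intro k _ hk
        rw [hJ]
        have : ¬ ((k : ℕ) + 1 = (j : ℕ)) := by
          intro hc
          apply hk
          apply Fin.ext
          simp [← hc]
        simp [this]
      · intro hk; exact absurd (Finset.mem_univ _) hk
  simp only [Matrix.sub_apply, hJG, hGJ]
  rw [show gAux n M (i.val + 1) j.val =
      (if h : i.val < n ∧ j.val < n then M ⟨i.val, h.1⟩ ⟨j.val, h.2⟩ else 0) +
      (if j.val = 0 then 0 else gAux n M i.val (j.val - 1)) from rfl]
  have hcond : i.val < n ∧ j.val < n := ⟨i.isLt, j.isLt⟩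
  rw [dif_pos hcond]
  simp only [Fin.eta]
  ring
end

section
/- Assume b_1 = (B_1)_{n,1} ≠ 0. Write det(ζ·I − B(z)) = ζ^n + c_1(z) ζ^{n−1} + ⋯ + c_n(z) with c_1, …, c_n ∈ ℂ[[z]]. Then c_i(0) = 0 for every 1 ≤ i ≤ n and the z-adic valuation of c_n is exactly 1; consequently this polynomial in ζ is an Eisenstein polynomial at the maximal ideal (z) of ℂ[[z]] and is irreducible over the field of formal Laurent series ℂ((z)). -/
open Polynomial

lemma coeff_one_mul' (f g : PowerSeries ℂ) :
    PowerSeries.coeff 1 (f * g) =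
      PowerSeries.constantCoeff f * PowerSeries.coeff 1 g +
        PowerSeries.coeff 1 f * PowerSeries.constantCoeff g := by
  rw [PowerSeries.coeff_mul]
  simp [Finset.Nat.antidiagonal_succ, Finset.sum_insert, Prod.map,
    PowerSeries.coeff_zero_eq_constantCoeff]

/-- If `b₁ = (B₁)_{n,1} ≠ 0` then, writing `det(ζI - B(z)) = ζⁿ + c₁(z)ζ^{n-1} + ⋯ + cₙ(z)`,
all `cᵢ(0) = 0`, the `z`-adic valuation of `cₙ` is exactly `1`; consequently the
characteristic polynomial is Eisenstein at the maximal ideal `(z)` of `ℂ[[z]]` and is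
irreducible over the Laurent series field `ℂ((z))`. -/
theorem charpoly_eisenstein_irreducible (n : ℕ) (hn : 2 ≤ n)
    (Bc : ℕ → Matrix (Fin n) (Fin n) ℂ)
    (hB0 : ∀ i j : Fin n, Bc 0 i j = if (i : ℕ) + 1 = (j : ℕ) then 1 else 0)
    (hBrow : ∀ ℓ : ℕ, 1 ≤ ℓ → ∀ i j : Fin n, (i : ℕ) + 1 < n → Bc ℓ i j = 0)
    (hb1 : Bc 1 ⟨n - 1, by omega⟩ ⟨0, by omega⟩ ≠ 0) :
    (∀ i : ℕ, 1 ≤ i → i ≤ n →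
      PowerSeries.constantCoeff
        ((Matrix.charpoly (fun i j : Fin n => PowerSeries.mk fun m => Bc m i j)).coeff (n - i))
        = 0) ∧
    PowerSeries.coeff 1
        ((Matrix.charpoly (fun i j : Fin n => PowerSeries.mk fun m => Bc m i j)).coeff 0) ≠ 0 ∧
    (Matrix.charpoly (fun i j : Fin n => PowerSeries.mk fun m => Bc m i j)).IsEisensteinAt
      (Ideal.span {PowerSeries.X}) ∧
    Irreducible ((Matrix.charpoly (fun i j : Fin n => PowerSeries.mk fun m => Bc m i j)).map
      (algebraMap (PowerSeries ℂ) (LaurentSeries ℂ))) := by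
  set M : Matrix (Fin n) (Fin n) (PowerSeries ℂ) :=
    fun i j => PowerSeries.mk fun m => Bc m i j with hM
  -- the constant-coefficient matrix is the Jordan block
  have hmap : M.map (PowerSeries.constantCoeff) = Bc 0 := by
    ext i j
    rw [Matrix.map_apply]
    simp [hM]
  -- charpoly of the Jordan block is X^n
  have hcp0 : (Bc 0).charpoly = X ^ n := by
    have h1 : (Matrix.charmatrix (Bc 0)).BlockTriangular id := by
      intro i j hij
      have hne : i ≠ j := by
        intro h; subst h; exact lt_irrefl _ hij
      rw [Matrix.charmatrix_apply_ne _ _ _ hne, hB0]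
      have hji : (j : ℕ) < (i : ℕ) := hij
      have : ¬ ((i : ℕ) + 1 = (j : ℕ)) := by omega
      simp [this]
    rw [Matrix.charpoly, Matrix.det_of_upperTriangular h1]
    have h2 : ∀ i : Fin n, Matrix.charmatrix (Bc 0) i i = X := by
      intro i
      rw [Matrix.charmatrix_apply_eq, hB0, if_neg (by omega)]
      simp
    rw [Finset.prod_congr rfl fun i _ => h2 i, Finset.prod_const, Finset.card_univ,
      Fintype.card_fin]
  -- all low coefficients have zero constant coefficient
  have hconst : ∀ k : ℕ, k < n →
      PowerSeries.constantCoeff ((Matrix.charpoly M).coeff k) = 0 := by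
    intro k hk
    have : PowerSeries.constantCoeff ((Matrix.charpoly M).coeff k)
        = ((Matrix.charpoly M).map (PowerSeries.constantCoeff)).coeff k := by
      rw [Polynomial.coeff_map]
    rw [this, ← Matrix.charpoly_map, hmap, hcp0, Polynomial.coeff_X_pow, if_neg hk.ne]
  -- compute coeff 1 of det M
  obtain ⟨m, rfl⟩ : ∃ m, n = m + 1 := ⟨n - 1, by omega⟩
  have hcol : ∀ i : Fin (m + 1), (i : ℕ) + 1 < m + 1 → M i 0 = 0 := by
    intro i hi
    ext k
    rcases Nat.eq_zero_or_pos k with hk | hk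
    · subst hk
      simp [hM, hB0]
    · simp [hM, hBrow k hk i 0 hi]
  have hdet : M.det = (-1 : PowerSeries ℂ) ^ m * M (Fin.last m) 0 *
      (M.submatrix (Fin.last m).succAbove Fin.succ).det := by
    rw [Matrix.det_succ_column_zero]
    rw [Finset.sum_eq_single (Fin.last m)]
    · simp
    · intro i _ hi
      have : (i : ℕ) + 1 < m + 1 := by
        have := Fin.is_le i
        have hne : (i : ℕ) ≠ m := fun h => hi (Fin.ext h)
        omega
      rw [hcol i this]
      ring
    · intro h; exact absurd (Finset.mem_univ _) h
  -- the minor has constant coefficient determinant 1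
  have hminor : PowerSeries.constantCoeff
      (M.submatrix (Fin.last m).succAbove Fin.succ).det = 1 := by
    rw [RingHom.map_det]
    have : (PowerSeries.constantCoeff).mapMatrix (M.submatrix (Fin.last m).succAbove Fin.succ)
        = (1 : Matrix (Fin m) (Fin m) ℂ) := by
      ext i j
      simp only [RingHom.mapMatrix_apply, Matrix.map_apply, Matrix.submatrix_apply]
      simp only [hM]
      rw [Fin.succAbove_last]
      simp only [PowerSeries.constantCoeff_mk, hB0]
      rcases eq_or_ne i j with h | h
      · subst h; simp [Matrix.one_apply]
      · have : ¬ ((i : ℕ) + 1 = (j : ℕ) + 1) := by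
          intro hc
          exact h (Fin.ext (by omega))
        simp [Matrix.one_apply, this, h, Fin.val_inj]
    rw [this, Matrix.det_one]
  have hlast0 : PowerSeries.constantCoeff (M (Fin.last m) 0) = 0 := by
    simp [hM, hB0]
  have hlast1 : PowerSeries.coeff 1 (M (Fin.last m) 0) = Bc 1 ⟨m, by omega⟩ ⟨0, by omega⟩ := by
    simp [hM]
    congr 1
  have hb1' : Bc 1 ⟨m, by omega⟩ ⟨0, by omega⟩ ≠ 0 := by
    convert hb1 using 3 <;> omega
  have hdet1 : PowerSeries.coeff 1 M.det = (-1 : ℂ) ^ m * Bc 1 ⟨m, by omega⟩ ⟨0, by omega⟩ := by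
    have hC : ((-1 : PowerSeries ℂ)) ^ m = PowerSeries.C ((-1 : ℂ) ^ m) := by
      rw [map_pow, map_neg, map_one]
    rw [hdet, mul_assoc, hC, PowerSeries.coeff_C_mul, coeff_one_mul', hlast0, hlast1, hminor]
    ring
  have hdeg : (Matrix.charpoly M).natDegree = m + 1 := by
    rw [Matrix.charpoly_natDegree_eq_dim, Fintype.card_fin]
  have hmonic : (Matrix.charpoly M).Monic := Matrix.charpoly_monic M
  have hc0 : (Matrix.charpoly M).coeff 0 = (-1 : PowerSeries ℂ) ^ (m + 1) * M.det := by
    have h := Matrix.det_eq_sign_charpoly_coeff M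
    rw [Fintype.card_fin] at h
    rw [h, ← mul_assoc, ← pow_add]
    have hev : Even ((m + 1) + (m + 1)) := ⟨m + 1, rfl⟩
    rw [hev.neg_one_pow, one_mul]
  have hcoeff1 : PowerSeries.coeff 1 ((Matrix.charpoly M).coeff 0) ≠ 0 := by
    have hC2 : ((-1 : PowerSeries ℂ)) ^ (m + 1) = PowerSeries.C ((-1 : ℂ) ^ (m + 1)) := by
      rw [map_pow, map_neg, map_one]
    rw [hc0, hC2, PowerSeries.coeff_C_mul, hdet1, ← mul_assoc, ← pow_add,
      show m + 1 + m = 2 * m + 1 by ring, pow_succ, pow_mul]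
    norm_num
    exact hb1'
  have hE : (Matrix.charpoly M).IsEisensteinAt (Ideal.span {PowerSeries.X}) := by
    constructor
    · rw [hmonic.leadingCoeff]
      intro h
      rw [Ideal.mem_span_singleton, PowerSeries.X_dvd_iff] at h
      simp at h
    · intro k hk
      rw [Ideal.mem_span_singleton, PowerSeries.X_dvd_iff]
      exact hconst k (hdeg ▸ hk)
    · intro h
      rw [Ideal.span_singleton_pow, Ideal.mem_span_singleton, PowerSeries.X_pow_dvd_iff] at h
      exact hcoeff1 (h 1 one_lt_two)
  have hPrime : (Ideal.span {(PowerSeries.X : PowerSeries ℂ)}).IsPrime :=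
    (Ideal.span_singleton_prime PowerSeries.X_ne_zero).2 PowerSeries.X_prime
  have hirr : Irreducible (Matrix.charpoly M) :=
    hE.irreducible hPrime hmonic.isPrimitive (by rw [hdeg]; omega)
  exact ⟨fun i h1 h2 => hconst (m + 1 - i) (by omega), hcoeff1, hE,
    (hmonic.irreducible_iff_irreducible_map_fraction_map).1 hirr⟩
end

section
/- Let n ≥ 1 and let χ(z,ζ) = ζ^n + c_1(z) ζ^{n−1} + ⋯ + c_n(z) be a monic polynomial in ζ with coefficients c_1, …, c_n ∈ ℂ[[z]] such that c_i(0) = 0 for every 1 ≤ i ≤ n and the z-adic valuation of c_n is exactly 1. Then there exists a formal power series ζ_1(w) = ∑_{m=1}^∞ a_m w^m ∈ ℂ[[w]] with zero constant term such that, with ω a primitive n-th root of unity, χ(w^n, ζ) = ∏_{i=0}^{n−1} ( ζ − ζ_1(ω^i w) ) holds in ℂ[[w]][ζ], where χ(w^n, ζ) denotes the polynomial obtained by substituting z = w^n into each coefficient c_j(z), and ζ_1(ω^i w) denotes the power series obtained from ζ_1 by rescaling w to ω^i w. -/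
open Polynomial

section AuxNP

lemma npAux_mem_maximalIdeal_iff (f : PowerSeries ℂ) :
    f ∈ IsLocalRing.maximalIdeal (PowerSeries ℂ) ↔ PowerSeries.constantCoeff f = 0 := by
  rw [IsLocalRing.mem_maximalIdeal, mem_nonunits_iff, PowerSeries.isUnit_iff_constantCoeff,
    isUnit_iff_ne_zero, not_ne_iff]

lemma npAux_maximalIdeal_eq : IsLocalRing.maximalIdeal (PowerSeries ℂ) =
    Ideal.span {(PowerSeries.X : PowerSeries ℂ)} := by
  ext f
  rw [npAux_mem_maximalIdeal_iff, Ideal.mem_span_singleton, PowerSeries.X_dvd_iff]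

lemma npAux_mem_pow_iff (f : PowerSeries ℂ) (m : ℕ) :
    f ∈ IsLocalRing.maximalIdeal (PowerSeries ℂ) ^ m ↔
      ∀ i < m, PowerSeries.coeff i f = 0 := by
  rw [npAux_maximalIdeal_eq, Ideal.span_singleton_pow, Ideal.mem_span_singleton,
    PowerSeries.X_pow_dvd_iff]

instance : IsAdicComplete (IsLocalRing.maximalIdeal (PowerSeries ℂ)) (PowerSeries ℂ) where
  haus' x hx := by
    ext i
    have := hx (i + 1)
    simp only [← Ideal.one_eq_top, smul_eq_mul, mul_one, SModEq.sub_mem, sub_zero,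
      npAux_mem_pow_iff] at this
    simpa using this i (by omega)
  prec' f hf := by
    refine ⟨PowerSeries.mk fun i => PowerSeries.coeff i (f (i + 1)), fun m => ?_⟩
    simp only [← Ideal.one_eq_top, smul_eq_mul, mul_one, SModEq.sub_mem, npAux_mem_pow_iff] at hf ⊢
    intro i hi
    have := hf (show i + 1 ≤ m by omega) i (by omega)
    simp only [map_sub, sub_eq_zero] at this ⊢
    rw [PowerSeries.coeff_mk, ← this]

lemma npAux_prod_X_sub_C_dvd {R : Type*} [CommRing R] [IsDomain R] (s : Finset ℕ) (r : ℕ → R)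
    (P : Polynomial R) (hroot : ∀ i ∈ s, P.eval (r i) = 0)
    (hinj : ∀ i ∈ s, ∀ j ∈ s, r i = r j → i = j) :
    (∏ i ∈ s, (X - C (r i))) ∣ P := by
  classical
  induction s using Finset.induction generalizing P with
  | empty => simp
  | insert a s ha ih =>
    obtain ⟨Q, hQ⟩ := (Polynomial.dvd_iff_isRoot.mpr (hroot a (Finset.mem_insert_self a s)))
    rw [Finset.prod_insert ha, hQ]
    refine mul_dvd_mul_left _ (ih _ (fun i hi => ?_) ?_)
    · have h0 := hroot i (Finset.mem_insert_of_mem hi)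
      rw [hQ, eval_mul, eval_sub, eval_X, eval_C, mul_eq_zero] at h0
      rcases h0 with h0 | h0
      · exact absurd (hinj i (Finset.mem_insert_of_mem hi) a (Finset.mem_insert_self a s)
          (sub_eq_zero.mp h0) ▸ hi) ha
      · exact h0
    · intro i hi j hj
      exact hinj i (Finset.mem_insert_of_mem hi) j (Finset.mem_insert_of_mem hj)

lemma npAux_hom_eval {R S : Type*} [CommRing R] [CommRing S] (φ : R →+* S) (p : Polynomial R)
    (x : R) : φ (p.eval x) = (p.map φ).eval (φ x) := by
  rw [Polynomial.eval_map, Polynomial.eval₂_hom]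

end AuxNP

/-- **Newton–Puiseux** (Theorem 1.4, totally ramified Eisenstein case): if
`χ(z,ζ) = ζⁿ + c₁(z)ζ^{n-1} + ⋯ + cₙ(z)` with `cᵢ(0) = 0` for all `i` and the `z`-adic
valuation of `cₙ` exactly `1`, then there is `ζ₁(w) ∈ ℂ[[w]]` with zero constant term
such that `χ(wⁿ, ζ) = ∏_{i=0}^{n-1} (ζ - ζ₁(ωⁱ w))` for `ω` a primitive `n`-th root of
unity. Here `cᵢ(wⁿ)` is the series whose `m`-th coefficient is the `(m/n)`-th coefficient
of `cᵢ` when `n ∣ m` and `0` otherwise, and `ζ₁(ωⁱw) = rescale (ωⁱ) ζ₁`. -/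
theorem newton_puiseux_eisenstein (n : ℕ) (hn : 1 ≤ n)
    (c : Fin n → PowerSeries ℂ)
    (hc0 : ∀ i : Fin n, PowerSeries.constantCoeff (c i) = 0)
    (hcn : PowerSeries.coeff 1 (c ⟨n - 1, by omega⟩) ≠ 0) :
    ∃ ζ1 : PowerSeries ℂ, PowerSeries.constantCoeff ζ1 = 0 ∧
      ∀ ω : ℂ, IsPrimitiveRoot ω n →
        Polynomial.X ^ n +
            ∑ i : Fin n,
              Polynomial.C (PowerSeries.mk fun m =>
                  if n ∣ m then PowerSeries.coeff (m / n) (c i) else 0)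
                * Polynomial.X ^ (n - 1 - (i : ℕ)) =
          ∏ i ∈ Finset.range n,
            (Polynomial.X - Polynomial.C (PowerSeries.rescale (ω ^ i) ζ1)) := by
  classical
  -- the substituted coefficients and their quotients by `w^n`
  set D : Fin n → PowerSeries ℂ := fun i =>
    PowerSeries.mk fun m => if n ∣ m then PowerSeries.coeff (m / n) (c i) else 0 with hD
  set F : Fin n → PowerSeries ℂ := fun i =>
    PowerSeries.mk fun m => if n ∣ m then PowerSeries.coeff (m / n + 1) (c i) else 0 with hF
  have hDF : ∀ i, D i = PowerSeries.X ^ n * F i := by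
    intro i
    ext m
    by_cases hm : n ≤ m
    · obtain ⟨d, rfl⟩ : ∃ d, m = d + n := ⟨m - n, by omega⟩
      rw [hD, hF]
      rw [PowerSeries.coeff_X_pow_mul]
      simp only [PowerSeries.coeff_mk]
      by_cases h : n ∣ d
      · obtain ⟨k, rfl⟩ := h
        have h1 : n ∣ n * k + n := ⟨k + 1, by ring⟩
        have h2 : (n * k + n) / n = k + 1 := by
          rw [show n * k + n = n * (k + 1) by ring, Nat.mul_div_cancel_left _ (by omega)]
        have h3 : n * k / n = k := Nat.mul_div_cancel_left _ (by omega)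
        simp [h1, h2, h3, Nat.dvd_mul_right]
      · have h1 : ¬ n ∣ d + n := fun hh => h ((Nat.dvd_add_self_right).mp hh)
        simp [h, h1]
    · push_neg at hm
      have h1 : PowerSeries.coeff m (PowerSeries.X ^ n * F i) = 0 :=
        PowerSeries.X_pow_dvd_iff.mp (dvd_mul_right _ _) m hm
      rw [h1, hD]
      simp only [PowerSeries.coeff_mk]
      by_cases h : n ∣ m
      · have hm0 : m = 0 := Nat.eq_zero_of_dvd_of_lt h hm
        subst hm0
        simpa [h] using hc0 i
      · simp [h]
  -- the two polynomials
  set χ : Polynomial (PowerSeries ℂ) :=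
    X ^ n + ∑ i : Fin n, C (D i) * X ^ (n - 1 - (i : ℕ)) with hχ
  set g : Polynomial (PowerSeries ℂ) :=
    X ^ n + ∑ i : Fin n, C (PowerSeries.X ^ (n - 1 - (i : ℕ)) * F i) * X ^ (n - 1 - (i : ℕ))
    with hg
  have hdeg : ∀ d : Fin n → PowerSeries ℂ,
      (∑ i : Fin n, C (d i) * X ^ (n - 1 - (i : ℕ))).degree < (n : WithBot ℕ) := by
    intro d
    refine lt_of_le_of_lt (Polynomial.degree_sum_le _ _) ?_
    rw [Finset.sup_lt_iff (by exact_mod_cast WithBot.bot_lt_coe n)]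
    intro i _
    refine lt_of_le_of_lt (Polynomial.degree_C_mul_X_pow_le _ _) ?_
    exact_mod_cast (by omega : n - 1 - (i : ℕ) < n)
  have hχmonic : χ.Monic := Polynomial.monic_X_pow_add (hdeg D)
  have hgmonic : g.Monic :=
    Polynomial.monic_X_pow_add (hdeg fun i => PowerSeries.X ^ (n - 1 - (i : ℕ)) * F i)
  -- evaluation identity
  have heval : ∀ u : PowerSeries ℂ,
      χ.eval (PowerSeries.X * u) = PowerSeries.X ^ n * g.eval u := by
    intro u
    rw [hχ, hg]
    simp only [eval_add, eval_pow, eval_mul, eval_X, eval_C, eval_finset_sum]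
    rw [mul_add, Finset.mul_sum]
    congr 1
    · ring
    refine Finset.sum_congr rfl fun i _ => ?_
    rw [hDF i, mul_pow]
    ring
  -- the reduction of `g` modulo the maximal ideal
  set a : ℂ := PowerSeries.coeff 1 (c ⟨n - 1, by omega⟩) with ha
  have hFa : PowerSeries.constantCoeff (F ⟨n - 1, by omega⟩) = a := by
    rw [hF]
    simp only [← PowerSeries.coeff_zero_eq_constantCoeff, PowerSeries.coeff_mk]
    simp [Nat.dvd_zero, ha]
  have hgmap : g.map (PowerSeries.constantCoeff) = X ^ n + C a := by
    rw [hg, Polynomial.map_add, Polynomial.map_pow, Polynomial.map_X, Polynomial.map_sum]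
    congr 1
    rw [Finset.sum_eq_single (⟨n - 1, by omega⟩ : Fin n)]
    · rw [Polynomial.map_mul, Polynomial.map_C, Polynomial.map_pow, Polynomial.map_X]
      simp [show n - 1 - (n - 1) = 0 by omega, hFa]
    · intro i _ hne
      have hlt : 0 < n - 1 - (i : ℕ) := by
        have h2 := i.2
        have : (i : ℕ) ≠ n - 1 := fun h => hne (Fin.ext h)
        omega
      rw [Polynomial.map_mul, Polynomial.map_C, Polynomial.map_pow, Polynomial.map_X]
      rw [map_mul, map_pow, PowerSeries.constantCoeff_X, zero_pow (by omega), zero_mul, map_zero,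
        zero_mul]
    · simp
  -- a simple root of the reduction
  obtain ⟨b, hb⟩ : ∃ b : ℂ, b ^ n = -a := by
    exact IsAlgClosed.exists_pow_nat_eq (-a) (n := n) (by omega)
  have hane : a ≠ 0 := hcn
  have hbne : b ≠ 0 := by
    intro h
    apply hane
    have := hb
    rw [h, zero_pow (by omega)] at this
    exact neg_eq_zero.mp this.symm
  -- apply Hensel's lemma
  have hhensel := HenselianRing.is_henselian (R := PowerSeries ℂ)
    (I := IsLocalRing.maximalIdeal (PowerSeries ℂ)) g hgmonic (PowerSeries.C b) ?_ ?_
  rotate_left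
  · rw [npAux_mem_maximalIdeal_iff, npAux_hom_eval, hgmap]
    simp [hb]
  · refine IsUnit.map _ ?_
    rw [PowerSeries.isUnit_iff_constantCoeff, npAux_hom_eval, ← Polynomial.derivative_map, hgmap]
    simp only [derivative_add, derivative_X_pow, derivative_C, add_zero, eval_mul, eval_pow,
      eval_C, eval_X, PowerSeries.constantCoeff_C]
    exact (isUnit_iff_ne_zero).mpr (by
      apply mul_ne_zero
      · exact_mod_cast Nat.cast_ne_zero.mpr (by omega)
      · exact pow_ne_zero _ hbne)
  obtain ⟨u, hu, hub⟩ := hhensel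
  -- the root of `χ`
  refine ⟨PowerSeries.X * u, by simp, ?_⟩
  have hub' : PowerSeries.constantCoeff u = b := by
    rw [npAux_mem_maximalIdeal_iff] at hub
    simp only [map_sub, PowerSeries.constantCoeff_C, sub_eq_zero] at hub
    exact hub
  have hroot : χ.eval (PowerSeries.X * u) = 0 := by
    rw [heval, show g.eval u = 0 from hu, mul_zero]
  intro ω hω
  set r : ℕ → PowerSeries ℂ := fun i => PowerSeries.rescale (ω ^ i) (PowerSeries.X * u) with hr
  -- the rescaling fixes the coefficients of `χ`
  have hDfix : ∀ (j : Fin n) (i : ℕ), PowerSeries.rescale (ω ^ i) (D j) = D j := by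
    intro j i
    ext m
    rw [PowerSeries.coeff_rescale, hD]
    simp only [PowerSeries.coeff_mk]
    by_cases h : n ∣ m
    · obtain ⟨k, rfl⟩ := h
      have : (ω ^ i) ^ (n * k) = 1 := by
        rw [← pow_mul, show i * (n * k) = n * (i * k) by ring, pow_mul, hω.pow_eq_one, one_pow]
      simp [this, Nat.dvd_mul_right]
    · simp [h]
  have hmapχ : ∀ i : ℕ, χ.map (PowerSeries.rescale (ω ^ i)) = χ := by
    intro i
    rw [hχ, Polynomial.map_add, Polynomial.map_pow, Polynomial.map_X, Polynomial.map_sum]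
    congr 1
    refine Finset.sum_congr rfl fun j _ => ?_
    rw [Polynomial.map_mul, Polynomial.map_C, Polynomial.map_pow, Polynomial.map_X, hDfix j i]
  -- every `r i` is a root of `χ`
  have hrooti : ∀ i : ℕ, χ.eval (r i) = 0 := by
    intro i
    have := npAux_hom_eval (PowerSeries.rescale (ω ^ i)) χ (PowerSeries.X * u)
    rw [hroot, map_zero, hmapχ i] at this
    exact this.symm
  -- the roots are pairwise distinct
  have hcoeff1 : ∀ i : ℕ, PowerSeries.coeff 1 (r i) = ω ^ i * b := by
    intro i
    rw [hr]
    simp only [PowerSeries.coeff_rescale, pow_one]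
    rw [PowerSeries.coeff_succ_X_mul 0, PowerSeries.coeff_zero_eq_constantCoeff, hub']
  have hinj : ∀ i ∈ Finset.range n, ∀ j ∈ Finset.range n, r i = r j → i = j := by
    intro i hi j hj hij
    have h1 : ω ^ i * b = ω ^ j * b := by rw [← hcoeff1, ← hcoeff1, hij]
    exact hω.pow_inj (Finset.mem_range.mp hi) (Finset.mem_range.mp hj)
      (mul_right_cancel₀ hbne h1)
  -- the product of the linear factors divides `χ`
  obtain ⟨k, hk⟩ := npAux_prod_X_sub_C_dvd (Finset.range n) r χ
    (fun i _ => hrooti i) hinj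
  set Q : Polynomial (PowerSeries ℂ) := ∏ i ∈ Finset.range n, (X - C (r i)) with hQdef
  have hQmonic : Q.Monic := monic_prod_of_monic _ _ fun i _ => monic_X_sub_C (r i)
  have hQdeg : Q.natDegree = n := by
    rw [hQdef, Polynomial.natDegree_prod_of_monic _ _ fun i _ => monic_X_sub_C (r i)]
    simp [Polynomial.natDegree_X_sub_C]
  have hχdeg : χ.natDegree = n := by
    refine Polynomial.natDegree_eq_of_degree_eq_some ?_
    rw [hχ]
    rw [show ((n : ℕ) : WithBot ℕ) = (X ^ n : Polynomial (PowerSeries ℂ)).degree by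
      rw [Polynomial.degree_X_pow]]
    exact Polynomial.degree_add_eq_left_of_degree_lt (by rw [Polynomial.degree_X_pow]; exact hdeg D)
  -- conclude `χ = Q`
  have hk0 : k ≠ 0 := by
    intro h
    exact hχmonic.ne_zero (by rw [hk, h, mul_zero])
  have hkdeg : k.natDegree = 0 := by
    have := congrArg Polynomial.natDegree hk
    rw [Polynomial.natDegree_mul hQmonic.ne_zero hk0, hχdeg, hQdeg] at this
    omega
  obtain ⟨e, rfl⟩ : ∃ e : PowerSeries ℂ, k = C e := ⟨k.coeff 0, eq_C_of_natDegree_eq_zero hkdeg⟩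
  have he : e = 1 := by
    have hlc := congrArg Polynomial.leadingCoeff hk
    rw [Polynomial.leadingCoeff_mul, hχmonic.leadingCoeff, hQmonic.leadingCoeff,
      Polynomial.leadingCoeff_C, one_mul] at hlc
    exact hlc.symm
  rw [hk, he, map_one, mul_one, hQdef]
end

section
/- Let n ≥ 2, k ≥ 1, and let A(z) = ∑_{m=0}^∞ A_m z^m be a formal power series with coefficients A_m ∈ M_n(ℂ) whose constant coefficient A_0 is similar to J. Suppose g(z) and g'(z) are two polynomial gauge transformations, i.e. g(z) = (I + g_k z^k) ⋯ (I + g_1 z) g_0 and g'(z) = (I + g'_k z^k) ⋯ (I + g'_1 z) g'_0 with g_0, g'_0 ∈ GL_n(ℂ) and g_i, g'_i ∈ M_n(ℂ), such that both B(z) = g(z) A(z) g(z)^{−1} = ∑_{m=0}^∞ B_m z^m and B'(z) = g'(z) A(z) g'(z)^{−1} = ∑_{m=0}^∞ B'_m z^m satisfy: B_0 = B'_0 = J, and for every 1 ≤ ℓ ≤ k the matrices B_ℓ and B'_ℓ have nonzero entries only in their n-th (last) row. If moreover the entry (B_1)_{n,1} ≠ 0, then B_ℓ = B'_ℓ for every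 0 ≤ ℓ ≤ k. -/
open PowerSeries Polynomial Matrix

/-- Entrywise conversion from power series with matrix coefficients to
matrices of power series; it is a ring homomorphism. -/
noncomputable def seriesToMat (n : ℕ) :
    PowerSeries (Matrix (Fin n) (Fin n) ℂ) →+* Matrix (Fin n) (Fin n) (PowerSeries ℂ) where
  toFun F := Matrix.of fun i j => PowerSeries.mk fun m => PowerSeries.coeff m F i j
  map_one' := by
    ext i j m
    rcases eq_or_ne m 0 with hm | hm <;>
      by_cases h : i = j <;>
        simp [hm, h, PowerSeries.coeff_one, Matrix.one_apply]
  map_mul' F G := by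
    ext i j m
    simp only [Matrix.of_apply, PowerSeries.coeff_mk, PowerSeries.coeff_mul, Matrix.mul_apply,
      Matrix.sum_apply, map_sum]
    exact Finset.sum_comm
  map_zero' := by
    ext i j m
    simp
  map_add' F G := by
    ext i j m
    simp [Matrix.add_apply]

lemma charpoly_eq_of_conj {R : Type*} [CommRing R] {n : ℕ}
    {M M' : Matrix (Fin n) (Fin n) R} (V : (Matrix (Fin n) (Fin n) R)ˣ)
    (h : M' * (V : Matrix (Fin n) (Fin n) R) = (V : Matrix (Fin n) (Fin n) R) * M) :
    M'.charpoly = M.charpoly := by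
  have key : Polynomial.C.mapMatrix M' * Polynomial.C.mapMatrix (V : Matrix (Fin n) (Fin n) R)
      = Polynomial.C.mapMatrix (V : Matrix (Fin n) (Fin n) R) * Polynomial.C.mapMatrix M := by
    rw [← _root_.map_mul, h, _root_.map_mul]
  have hcm : charmatrix M' * Polynomial.C.mapMatrix (V : Matrix (Fin n) (Fin n) R)
      = Polynomial.C.mapMatrix (V : Matrix (Fin n) (Fin n) R) * charmatrix M := by
    simp only [charmatrix, sub_mul, mul_sub, key,
      (Matrix.scalar_commute (X : R[X]) (Commute.all _)
        (Polynomial.C.mapMatrix (V : Matrix (Fin n) (Fin n) R))).eq]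
  have hunit : Polynomial.C.mapMatrix (V : Matrix (Fin n) (Fin n) R)
      * Polynomial.C.mapMatrix ((V⁻¹ : _ˣ) : Matrix (Fin n) (Fin n) R) = 1 := by
    rw [← _root_.map_mul, Units.mul_inv, _root_.map_one]
  have hunit' : Polynomial.C.mapMatrix ((V⁻¹ : _ˣ) : Matrix (Fin n) (Fin n) R)
      * Polynomial.C.mapMatrix (V : Matrix (Fin n) (Fin n) R) = 1 := by
    rw [← _root_.map_mul, Units.inv_mul, _root_.map_one]
  have hcm2 : charmatrix M' = Polynomial.C.mapMatrix (V : Matrix (Fin n) (Fin n) R)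
      * charmatrix M * Polynomial.C.mapMatrix ((V⁻¹ : _ˣ) : Matrix (Fin n) (Fin n) R) := by
    rw [← hcm, mul_assoc, hunit, mul_one]
  rw [Matrix.charpoly, Matrix.charpoly, hcm2, Matrix.det_mul, Matrix.det_mul]
  rw [mul_comm, ← mul_assoc, ← Matrix.det_mul, hunit', Matrix.det_one, one_mul]

/-- The last row of a companion-type matrix is determined by its characteristic
polynomial. -/
lemma companion_row {S : Type*} [CommRing S] [Nontrivial S] {n : ℕ} (hn : 2 ≤ n)
    (M : Matrix (Fin n) (Fin n) S)
    (hM : ∀ i j : Fin n, (i : ℕ) + 1 < n → M i j = if (i : ℕ) + 1 = (j : ℕ) then 1 else 0)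
    (j : Fin n) :
    M ⟨n - 1, by omega⟩ j = - M.charpoly.coeff (j : ℕ) := by
  have hn0 : 0 < n := by omega
  have hrow : ∀ m : ℕ, m < n → ∀ i : Fin n,
      (M ^ m) ⟨0, hn0⟩ i = if (i : ℕ) = m then 1 else 0 := by
    intro m
    induction m with
    | zero =>
      intro _ i
      simp [Matrix.one_apply, Fin.ext_iff, eq_comm]
    | succ m ih =>
      intro hm i
      rw [pow_succ, Matrix.mul_apply]
      rw [Finset.sum_eq_single (⟨m, by omega⟩ : Fin n)]
      · rw [ih (by omega), if_pos rfl, one_mul, hM _ _ (by simpa using hm)]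
        simp [eq_comm]
      · intro t _ ht
        rw [ih (by omega) t, if_neg (by simpa [Fin.ext_iff] using ht), zero_mul]
      · intro habs; exact absurd (Finset.mem_univ _) habs
  have hlast : ∀ i : Fin n, (M ^ n) ⟨0, hn0⟩ i = M ⟨n - 1, by omega⟩ i := by
    intro i
    have hpow : M ^ n = M ^ (n - 1) * M := by
      rw [← pow_succ]
      congr 1
      omega
    rw [hpow, Matrix.mul_apply, Finset.sum_eq_single (⟨n - 1, by omega⟩ : Fin n)]
    · rw [hrow (n - 1) (by omega), if_pos rfl, one_mul]
    · intro t _ ht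
      rw [hrow _ (by omega) t, if_neg (by simpa [Fin.ext_iff] using ht), zero_mul]
    · intro habs; exact absurd (Finset.mem_univ _) habs
  have hdeg : M.charpoly.natDegree = n := by
    rw [Matrix.charpoly_natDegree_eq_dim, Fintype.card_fin]
  have hCH := M.aeval_self_charpoly
  rw [aeval_eq_sum_range, hdeg] at hCH
  have h0 : (∑ m ∈ Finset.range (n + 1), M.charpoly.coeff m • M ^ m) ⟨0, hn0⟩ j = 0 := by
    rw [hCH]; rfl
  simp only [Matrix.sum_apply, Matrix.smul_apply, smul_eq_mul, Finset.sum_range_succ] at h0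
  have hcn : M.charpoly.coeff n = 1 := by
    have h1 := M.charpoly_monic.coeff_natDegree
    rwa [hdeg] at h1
  rw [hcn, one_mul] at h0
  have hsum : ∀ m ∈ Finset.range n,
      M.charpoly.coeff m * (M ^ m) ⟨0, hn0⟩ j
        = if (j : ℕ) = m then M.charpoly.coeff m else 0 := by
    intro m hm
    rw [hrow m (Finset.mem_range.mp hm)]
    by_cases h : (j : ℕ) = m <;> simp [h]
  rw [Finset.sum_congr rfl hsum, Finset.sum_ite_eq (Finset.range n) ((j : ℕ)),
    if_pos (Finset.mem_range.mpr j.isLt)] at h0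
  rw [← hlast j]
  exact eq_neg_of_add_eq_zero_left (by rwa [add_comm] at h0)

lemma quot_eq_of_coeff_eq (k : ℕ) {f g : PowerSeries ℂ}
    (h : ∀ m, m ≤ k → PowerSeries.coeff m f = PowerSeries.coeff m g) :
    Ideal.Quotient.mk (Ideal.span {(PowerSeries.X : PowerSeries ℂ) ^ (k + 1)}) f
      = Ideal.Quotient.mk (Ideal.span {(PowerSeries.X : PowerSeries ℂ) ^ (k + 1)}) g := by
  rw [Ideal.Quotient.eq, Ideal.mem_span_singleton, PowerSeries.X_pow_dvd_iff]
  intro m hm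
  rw [map_sub, h m (by omega), sub_self]

lemma coeff_eq_of_quot_eq (k : ℕ) {f g : PowerSeries ℂ}
    (h : Ideal.Quotient.mk (Ideal.span {(PowerSeries.X : PowerSeries ℂ) ^ (k + 1)}) f
      = Ideal.Quotient.mk (Ideal.span {(PowerSeries.X : PowerSeries ℂ) ^ (k + 1)}) g) :
    ∀ m, m ≤ k → PowerSeries.coeff m f = PowerSeries.coeff m g := by
  rw [Ideal.Quotient.eq, Ideal.mem_span_singleton, PowerSeries.X_pow_dvd_iff] at h
  intro m hm
  have h2 := h m (by omega)
  rw [map_sub, sub_eq_zero] at h2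
  exact h2

lemma gauge_isUnit {n k : ℕ} (g0 : (Matrix (Fin n) (Fin n) ℂ)ˣ)
    (gg : ℕ → Matrix (Fin n) (Fin n) ℂ) :
    IsUnit (((List.range k).reverse.map
        (fun i => (1 : PowerSeries (Matrix (Fin n) (Fin n) ℂ))
          + PowerSeries.monomial (i + 1) (gg (i + 1)))).prod
        * PowerSeries.C (g0 : Matrix (Fin n) (Fin n) ℂ)) := by
  rw [PowerSeries.isUnit_iff_constantCoeff, _root_.map_mul]
  have h1 : PowerSeries.constantCoeff ((List.range k).reverse.map
      (fun i => (1 : PowerSeries (Matrix (Fin n) (Fin n) ℂ))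
        + PowerSeries.monomial (i + 1) (gg (i + 1)))).prod = 1 := by
    rw [map_list_prod]
    apply List.prod_eq_one
    intro x hx
    simp only [List.map_map, List.mem_map] at hx
    obtain ⟨a, -, rfl⟩ := hx
    simp only [Function.comp_apply, map_add]
    have h2 : (PowerSeries.constantCoeff (R := Matrix (Fin n) (Fin n) ℂ))
        ((PowerSeries.monomial (a + 1)) (gg (a + 1))) = 0 := by
      rw [← PowerSeries.coeff_zero_eq_constantCoeff_apply, PowerSeries.coeff_monomial,
        if_neg (by omega)]
    rw [h2, add_zero, _root_.map_one]
  rw [h1, one_mul, PowerSeries.constantCoeff_C]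
  exact g0.isUnit



/-- **Uniqueness of the normal form.** If two polynomial gauge transformations
`g(z) = (I + g_k zᵏ)⋯(I + g₁ z) g₀` and `g'(z) = (I + g'_k zᵏ)⋯(I + g'₁ z) g'₀`
bring `A` (whose constant term is similar to the Jordan block `J`) to normal forms
`B = g A g⁻¹` and `B' = g' A g'⁻¹` (encoded by `B * g = g * A`, `B' * g' = g' * A`,
which determines `B`, `B'` since `g`, `g'` are invertible in `Mₙ(ℂ)[[z]]`), i.e.
`B₀ = B'₀ = J` and `B_ℓ`, `B'_ℓ` are nonzero only in the last row for `1 ≤ ℓ ≤ k`,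
and if moreover `(B₁)_{n,1} ≠ 0`, then `B_ℓ = B'_ℓ` for all `0 ≤ ℓ ≤ k`. -/
theorem normal_form_uniqueness (n k : ℕ) (hn : 2 ≤ n) (hk : 1 ≤ k)
    (J : Matrix (Fin n) (Fin n) ℂ)
    (hJ : ∀ i j : Fin n, J i j = if (i : ℕ) + 1 = (j : ℕ) then 1 else 0)
    (A : PowerSeries (Matrix (Fin n) (Fin n) ℂ))
    (hA0 : ∃ P : (Matrix (Fin n) (Fin n) ℂ)ˣ,
      PowerSeries.coeff 0 A = (P : Matrix (Fin n) (Fin n) ℂ) * J * (↑P⁻¹ : Matrix (Fin n) (Fin n) ℂ))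
    (g0 g0' : (Matrix (Fin n) (Fin n) ℂ)ˣ)
    (gs gs' : ℕ → Matrix (Fin n) (Fin n) ℂ)
    (B B' : PowerSeries (Matrix (Fin n) (Fin n) ℂ))
    (hB : B * (((List.range k).reverse.map
        (fun i => (1 : PowerSeries (Matrix (Fin n) (Fin n) ℂ))
          + PowerSeries.monomial (i + 1) (gs (i + 1)))).prod
        * PowerSeries.C (g0 : Matrix (Fin n) (Fin n) ℂ)) =
      (((List.range k).reverse.map
        (fun i => (1 : PowerSeries (Matrix (Fin n) (Fin n) ℂ))
          + PowerSeries.monomial (i + 1) (gs (i + 1)))).prod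
        * PowerSeries.C (g0 : Matrix (Fin n) (Fin n) ℂ)) * A)
    (hB' : B' * (((List.range k).reverse.map
        (fun i => (1 : PowerSeries (Matrix (Fin n) (Fin n) ℂ))
          + PowerSeries.monomial (i + 1) (gs' (i + 1)))).prod
        * PowerSeries.C (g0' : Matrix (Fin n) (Fin n) ℂ)) =
      (((List.range k).reverse.map
        (fun i => (1 : PowerSeries (Matrix (Fin n) (Fin n) ℂ))
          + PowerSeries.monomial (i + 1) (gs' (i + 1)))).prod
        * PowerSeries.C (g0' : Matrix (Fin n) (Fin n) ℂ)) * A)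
    (hB0 : PowerSeries.coeff 0 B = J) (hB0' : PowerSeries.coeff 0 B' = J)
    (hBrow : ∀ ℓ : ℕ, 1 ≤ ℓ → ℓ ≤ k → ∀ i j : Fin n, (i : ℕ) + 1 < n →
      PowerSeries.coeff ℓ B i j = 0)
    (hBrow' : ∀ ℓ : ℕ, 1 ≤ ℓ → ℓ ≤ k → ∀ i j : Fin n, (i : ℕ) + 1 < n →
      PowerSeries.coeff ℓ B' i j = 0)
    (hb1 : PowerSeries.coeff 1 B ⟨n - 1, by omega⟩ ⟨0, by omega⟩ ≠ 0) :
    ∀ ℓ : ℕ, ℓ ≤ k → PowerSeries.coeff ℓ B = PowerSeries.coeff ℓ B' := by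
  classical
  obtain ⟨u, hu⟩ := gauge_isUnit (k := k) g0 gs
  obtain ⟨u', hu'⟩ := gauge_isUnit (k := k) g0' gs'
  rw [← hu] at hB
  rw [← hu'] at hB'
  -- conjugation relation
  have hA : A = ↑u⁻¹ * (B * ↑u) := by rw [hB, Units.inv_mul_cancel_left]
  have hw : B' * ↑(u' * u⁻¹) = ↑(u' * u⁻¹) * B := by
    have h3 : B' * (↑u' * ↑u⁻¹) = ↑u' * ↑u⁻¹ * B := by
      rw [← mul_assoc, hB', hA]
      simp [mul_assoc, Units.mul_inv_cancel_left, Units.inv_mul_cancel_left]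
    simpa [Units.val_mul] using h3
  -- transport through entrywise conversion
  have hW : seriesToMat n B' * seriesToMat n ↑(u' * u⁻¹)
      = seriesToMat n ↑(u' * u⁻¹) * seriesToMat n B := by
    rw [← _root_.map_mul, hw, _root_.map_mul]
  have hcp : (seriesToMat n B').charpoly = (seriesToMat n B).charpoly :=
    charpoly_eq_of_conj (Units.map (seriesToMat n).toMonoidHom (u' * u⁻¹))
      (by simpa [Units.coe_map] using hW)
  -- the quotient ring
  haveI : Nontrivial (PowerSeries ℂ ⧸ Ideal.span {(PowerSeries.X : PowerSeries ℂ) ^ (k + 1)}) := by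
    refine Ideal.Quotient.nontrivial_iff.mpr ?_
    rw [Ne, Ideal.span_singleton_eq_top]
    intro hunit
    have h0 := hunit.map (PowerSeries.constantCoeff (R := ℂ))
    rw [map_pow, PowerSeries.constantCoeff_X, zero_pow (by omega : k + 1 ≠ 0)] at h0
    exact not_isUnit_zero h0
  set π := Ideal.Quotient.mk (Ideal.span {(PowerSeries.X : PowerSeries ℂ) ^ (k + 1)}) with hπ
  -- companion shapes
  have hNcomp : ∀ (F : PowerSeries (Matrix (Fin n) (Fin n) ℂ)),
      PowerSeries.coeff 0 F = J →
      (∀ ℓ : ℕ, 1 ≤ ℓ → ℓ ≤ k → ∀ i j : Fin n, (i : ℕ) + 1 < n →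
        PowerSeries.coeff ℓ F i j = 0) →
      ∀ i j : Fin n, (i : ℕ) + 1 < n →
        ((seriesToMat n F).map π) i j = if (i : ℕ) + 1 = (j : ℕ) then 1 else 0 := by
    intro F hF0 hFrow i j hij
    have h2 : π ((seriesToMat n F) i j) = π (PowerSeries.C (J i j)) := by
      apply quot_eq_of_coeff_eq
      intro m hm
      rcases Nat.eq_zero_or_pos m with rfl | hmpos
      · simp only [seriesToMat, RingHom.coe_mk, MonoidHom.coe_mk, OneHom.coe_mk,
          Matrix.of_apply, PowerSeries.coeff_mk, hF0, PowerSeries.coeff_zero_C]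
      · simp only [seriesToMat, RingHom.coe_mk, MonoidHom.coe_mk, OneHom.coe_mk,
          Matrix.of_apply, PowerSeries.coeff_mk, hFrow m hmpos hm i j hij,
          PowerSeries.coeff_C, if_neg (by omega : ¬ m = 0)]
    rw [Matrix.map_apply, h2, hJ i j]
    by_cases h : (i : ℕ) + 1 = (j : ℕ) <;> simp [h]
  -- charpoly equality downstairs
  have hNcp : ((seriesToMat n B).map π).charpoly = ((seriesToMat n B').map π).charpoly := by
    rw [Matrix.charpoly_map, Matrix.charpoly_map, hcp]
  -- last rows agree in the quotient
  have hlastrow : ∀ j : Fin n,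
      π ((seriesToMat n B) ⟨n - 1, by omega⟩ j) = π ((seriesToMat n B') ⟨n - 1, by omega⟩ j) := by
    intro j
    have e1 := companion_row hn ((seriesToMat n B).map π)
      (hNcomp B hB0 hBrow) j
    have e2 := companion_row hn ((seriesToMat n B').map π)
      (hNcomp B' hB0' hBrow') j
    have e3 : ((seriesToMat n B).map π) ⟨n - 1, by omega⟩ j
        = ((seriesToMat n B').map π) ⟨n - 1, by omega⟩ j := by
      rw [e1, e2, hNcp]
    simpa [Matrix.map_apply] using e3
  -- conclude
  intro ℓ hℓ
  ext i j
  by_cases hi : (i : ℕ) + 1 < n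
  · rcases Nat.eq_zero_or_pos ℓ with rfl | hp
    · rw [hB0, hB0']
    · rw [hBrow ℓ hp hℓ i j hi, hBrow' ℓ hp hℓ i j hi]
  · have hii : i = ⟨n - 1, by omega⟩ := by
      apply Fin.ext
      have := i.isLt
      simp only []
      omega
    rw [hii]
    have h4 := coeff_eq_of_quot_eq k (hlastrow j) ℓ hℓ
    simpa [seriesToMat, PowerSeries.coeff_mk] using h4
end
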